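/- arXiv:1801.00726 — 4 statements merged into one kernel-verified Lean document; each statement's English description precedes it below -/
import Mathlib

section
/- If G is a finite simple graph without isolated vertices, then the brushing number of G is at most the zero forcing number of the line graph of G, i.e., B(G) ≤ Z(L(G)). -/
open SimpleGraph

/-- `σ` is an ordering of the vertices of `H` witnessing that its first `k` vertices form a
zero forcing set: every vertex at position `j ≥ k` is forced by some earlier vertex `σ i`,
i.e. `σ j` is the unique neighbor of `σ i` among `{σ j, σ (j+1), …}`. -/
def IsZeroForcingOrder {V : Type*} [Fintype V] (H : SimpleGraph V) (k : ℕ)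
    (σ : Fin (Fintype.card V) ≃ V) : Prop :=
  ∀ j : Fin (Fintype.card V), k ≤ (j : ℕ) →
    ∃ i : Fin (Fintype.card V), (i : ℕ) < (j : ℕ) ∧
      ∀ l : Fin (Fintype.card V), (j : ℕ) ≤ (l : ℕ) → (H.Adj (σ i) (σ l) ↔ l = j)

/-- The zero forcing number of a finite simple graph. -/
noncomputable def zeroForcingNumber {V : Type*} [Fintype V] (H : SimpleGraph V) : ℕ :=
  sInf {k | 1 ≤ k ∧ ∃ σ : Fin (Fintype.card V) ≃ V, IsZeroForcingOrder H k σ}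

/-- An orientation of a simple graph: each edge receives exactly one direction. -/
structure GraphOrientation {V : Type*} (G : SimpleGraph V) where
  rel : V → V → Prop
  adj_of_rel : ∀ u v, rel u v → G.Adj u v
  rel_of_adj : ∀ u v, G.Adj u v → rel u v ∨ rel v u
  not_rel_symm : ∀ u v, rel u v → ¬ rel v u

/-- An orientation is acyclic if it has no directed cycle. -/
def GraphOrientation.Acyclic {V : Type*} {G : SimpleGraph V} (o : GraphOrientation G) : Prop :=
  ∀ v : V, ¬ Relation.TransGen o.rel v v

/-- The brushing number of a finite simple graph: the minimum positive integer `k` for which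
there is an acyclic orientation of `G` and `k` directed paths in that orientation such that
each directed edge belongs to at least one of the paths. -/
noncomputable def brushingNumber {V : Type*} [Fintype V] (G : SimpleGraph V) : ℕ :=
  sInf {k | 1 ≤ k ∧ ∃ o : GraphOrientation G, o.Acyclic ∧
    ∃ P : Fin k → List V, (∀ i, (P i).Chain' o.rel) ∧
      ∀ u v : V, o.rel u v → ∃ i, [u, v] <:+: P i}

namespace BZAux

variable {V : Type*} [Fintype V] [DecidableEq V]
  {G : SimpleGraph V} [DecidableRel G.Adj]
  {k : ℕ} {σ : Fin (Fintype.card G.edgeSet) ≃ G.edgeSet}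

/-- chosen forcer -/
noncomputable def fc (hσ : IsZeroForcingOrder G.lineGraph k σ) (j : Fin (Fintype.card G.edgeSet)) :
    Fin (Fintype.card G.edgeSet) :=
  if h : k ≤ (j : ℕ) then (hσ j h).choose else j

variable (hσ : IsZeroForcingOrder G.lineGraph k σ)
variable {j b b' a : Fin (Fintype.card G.edgeSet)}

lemma fc_lt (h : k ≤ (j : ℕ)) : ((fc hσ j : ℕ)) < (j : ℕ) := by
  unfold fc; rw [dif_pos h]; exact (hσ j h).choose_spec.1

lemma fc_spec (h : k ≤ (j : ℕ)) :
    ∀ l : Fin (Fintype.card G.edgeSet),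
      (j : ℕ) ≤ (l : ℕ) → (G.lineGraph.Adj (σ (fc hσ j)) (σ l) ↔ l = j) := by
  unfold fc; rw [dif_pos h]; exact (hσ j h).choose_spec.2

lemma fc_adj (h : k ≤ (j : ℕ)) : G.lineGraph.Adj (σ (fc hσ j)) (σ j) :=
  (fc_spec hσ h j le_rfl).mpr rfl

lemma fc_inj (hb : k ≤ (b : ℕ)) (hb' : k ≤ (b' : ℕ)) (h : fc hσ b = fc hσ b') :
    b = b' := by
  rcases le_total (b : ℕ) (b' : ℕ) with hle | hle
  · have := (fc_spec hσ hb b' hle).mp (h ▸ fc_adj hσ hb')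
    exact this.symm
  · have := (fc_spec hσ hb' b hle).mp (h ▸ fc_adj hσ hb)
    exact this

/-- the pivot vertex shared by a forced edge and its forcer -/
noncomputable def piv (j : Fin (Fintype.card G.edgeSet)) (h : k ≤ (j : ℕ)) : V :=
  ((lineGraph_adj_iff_exists.mp (fc_adj hσ h)).2).choose

lemma piv_mem_fc (h : k ≤ (j : ℕ)) : piv hσ j h ∈ (σ (fc hσ j) : Sym2 V) :=
  ((lineGraph_adj_iff_exists.mp (fc_adj hσ h)).2).choose_spec.1

lemma piv_mem (h : k ≤ (j : ℕ)) : piv hσ j h ∈ (σ j : Sym2 V) :=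
  ((lineGraph_adj_iff_exists.mp (fc_adj hσ h)).2).choose_spec.2

/-- chosen successor (the edge that `j` forces, if any) -/
noncomputable def succ (hσ : IsZeroForcingOrder G.lineGraph k σ)
    (a : Fin (Fintype.card G.edgeSet)) : Option (Fin (Fintype.card G.edgeSet)) :=
  if h : ∃ b : Fin (Fintype.card G.edgeSet), k ≤ (b : ℕ) ∧ fc hσ b = a then some h.choose
  else none

lemma succ_eq_some (hb : k ≤ (b : ℕ)) (hfc : fc hσ b = a) : succ hσ a = some b := by
  unfold succ
  have hex : ∃ b : Fin (Fintype.card G.edgeSet), k ≤ (b : ℕ) ∧ fc hσ b = a := ⟨b, hb, hfc⟩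
  rw [dif_pos hex]
  congr 1
  exact fc_inj hσ hex.choose_spec.1 hb (hex.choose_spec.2.trans hfc.symm)

lemma succ_spec (h : succ hσ a = some b) :
    k ≤ (b : ℕ) ∧ fc hσ b = a ∧ (a : ℕ) < (b : ℕ) := by
  unfold succ at h
  split_ifs at h with hh
  · have hc := hh.choose_spec
    obtain rfl : hh.choose = b := Option.some.inj h
    refine ⟨hc.1, hc.2, ?_⟩
    have := fc_lt hσ hc.1
    rwa [hc.2] at this


variable (hiso : ∀ v : V, ∃ w : V, G.Adj v w)

/-- the largest-index edge through a vertex -/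
noncomputable def emax (σ : Fin (Fintype.card G.edgeSet) ≃ G.edgeSet)
    (hiso : ∀ v : V, ∃ w : V, G.Adj v w) (v : V) : Fin (Fintype.card G.edgeSet) :=
  Finset.max' (Finset.univ.filter fun l => v ∈ (σ l : Sym2 V))
    ⟨σ.symm ⟨s(v, (hiso v).choose), (hiso v).choose_spec⟩, by
      simp only [Finset.mem_filter, Finset.mem_univ, true_and, Equiv.apply_symm_apply]
      exact Sym2.mem_mk_left _ _⟩

lemma mem_emax (v : V) : v ∈ (σ (emax σ hiso v) : Sym2 V) := by
  have := Finset.max'_mem (Finset.univ.filter fun l => v ∈ (σ l : Sym2 V))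
    ⟨σ.symm ⟨s(v, (hiso v).choose), (hiso v).choose_spec⟩, by
      simp only [Finset.mem_filter, Finset.mem_univ, true_and, Equiv.apply_symm_apply]
      exact Sym2.mem_mk_left _ _⟩
  exact (Finset.mem_filter.mp this).2

lemma le_emax {v : V} {l : Fin (Fintype.card G.edgeSet)} (h : v ∈ (σ l : Sym2 V)) :
    (l : ℕ) ≤ (emax σ hiso v : ℕ) := by
  have : l ≤ emax σ hiso v :=
    Finset.le_max' _ l (by simp only [Finset.mem_filter, Finset.mem_univ, true_and]; exact h)
  exact this

/-- source and target of each edge -/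
noncomputable def st (j : Fin (Fintype.card G.edgeSet)) : V × V :=
  let u := (σ j : Sym2 V).out.1
  let v := (σ j : Sym2 V).out.2
  if h : k ≤ (j : ℕ) then
    if u = piv hσ j h then (u, v) else (v, u)
  else
    match hs : succ hσ j with
    | some j' => if u = piv hσ j' (succ_spec hσ hs).1 then (v, u) else (u, v)
    | none => if (emax σ hiso u : ℕ) ≤ (emax σ hiso v : ℕ) then (u, v) else (v, u)

noncomputable def src (j : Fin (Fintype.card G.edgeSet)) : V := (st hσ hiso j).1
noncomputable def tgt (j : Fin (Fintype.card G.edgeSet)) : V := (st hσ hiso j).2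

lemma st_cases (j : Fin (Fintype.card G.edgeSet)) :
    st hσ hiso j = ((σ j : Sym2 V).out.1, (σ j : Sym2 V).out.2) ∨
    st hσ hiso j = ((σ j : Sym2 V).out.2, (σ j : Sym2 V).out.1) := by
  unfold st
  dsimp only
  split
  · split_ifs <;> simp
  · split
    · split_ifs <;> simp
    · split_ifs <;> simp

lemma out_ne (j : Fin (Fintype.card G.edgeSet)) :
    (σ j : Sym2 V).out.1 ≠ (σ j : Sym2 V).out.2 := by
  intro h
  apply G.not_isDiag_of_mem_edgeSet (σ j).2
  rw [← (σ j : Sym2 V).out_eq]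
  exact (Sym2.isDiag_iff_proj_eq (x := (σ j : Sym2 V).out.1) (y := (σ j : Sym2 V).out.2)).mpr h

lemma edge_eq (j : Fin (Fintype.card G.edgeSet)) :
    (σ j : Sym2 V) = s(src hσ hiso j, tgt hσ hiso j) := by
  rcases st_cases hσ hiso j with h | h <;>
    simp only [src, tgt, h]
  · exact (Quot.out_eq _).symm
  · rw [Sym2.eq_swap]; exact (Quot.out_eq _).symm

lemma src_ne_tgt (j : Fin (Fintype.card G.edgeSet)) : src hσ hiso j ≠ tgt hσ hiso j := by
  rcases st_cases hσ hiso j with h | h <;> simp only [src, tgt, h]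
  · exact out_ne j
  · exact (out_ne j).symm

lemma src_mem (j : Fin (Fintype.card G.edgeSet)) : src hσ hiso j ∈ (σ j : Sym2 V) := by
  rw [edge_eq hσ hiso j]; exact Sym2.mem_mk_left _ _

lemma tgt_mem (j : Fin (Fintype.card G.edgeSet)) : tgt hσ hiso j ∈ (σ j : Sym2 V) := by
  rw [edge_eq hσ hiso j]; exact Sym2.mem_mk_right _ _


lemma piv_eq_out (h : k ≤ (j : ℕ)) :
    piv hσ j h = (σ j : Sym2 V).out.1 ∨ piv hσ j h = (σ j : Sym2 V).out.2 := by
  have hm := piv_mem hσ h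
  rw [← (σ j : Sym2 V).out_eq] at hm
  exact Sym2.mem_iff.mp hm

lemma src_forced (h : k ≤ (j : ℕ)) : src hσ hiso j = piv hσ j h := by
  unfold src st
  dsimp only
  rw [dif_pos h]
  split_ifs with h1
  · exact h1
  · rcases piv_eq_out hσ h with h2 | h2
    · exact absurd h2.symm h1
    · exact h2.symm

lemma piv_succ_ne {j j' : Fin (Fintype.card G.edgeSet)}
    (hj : k ≤ (j : ℕ)) (hs : succ hσ j = some j') :
    piv hσ j' (succ_spec hσ hs).1 ≠ piv hσ j hj := by
  intro he
  obtain ⟨hj', hfc, hlt⟩ := succ_spec hσ hs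
  have h1 : piv hσ j' (succ_spec hσ hs).1 ∈ (σ (fc hσ j) : Sym2 V) := by
    rw [he]; exact piv_mem_fc hσ hj
  have h2 : piv hσ j' (succ_spec hσ hs).1 ∈ (σ j' : Sym2 V) := piv_mem hσ _
  have hne : σ (fc hσ j) ≠ σ j' := by
    intro hh
    have heq := σ.injective hh
    have := fc_lt hσ hj
    rw [heq] at this
    omega
  have hadj : G.lineGraph.Adj (σ (fc hσ j)) (σ j') :=
    lineGraph_adj_iff_exists.mpr ⟨hne, _, h1, h2⟩
  have := (fc_spec hσ hj j' (le_of_lt hlt)).mp hadj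
  rw [this] at hlt
  omega

lemma tgt_of_succ {j j' : Fin (Fintype.card G.edgeSet)} (hs : succ hσ j = some j') :
    tgt hσ hiso j = piv hσ j' (succ_spec hσ hs).1 := by
  obtain ⟨hj', hfc, hlt⟩ := succ_spec hσ hs
  have hmem : piv hσ j' (succ_spec hσ hs).1 ∈ (σ j : Sym2 V) := by
    have h0 := piv_mem_fc hσ (succ_spec hσ hs).1
    have h2 : (σ (fc hσ j') : Sym2 V) = (σ j : Sym2 V) := by rw [hfc]
    rwa [h2] at h0
  by_cases hj : k ≤ (j : ℕ)
  · have hne := piv_succ_ne hσ hj hs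
    rw [edge_eq hσ hiso j, Sym2.mem_iff] at hmem
    rcases hmem with h | h
    · exact absurd (h.trans (src_forced hσ hiso hj)) hne
    · exact h.symm
  · unfold tgt st
    dsimp only
    rw [dif_neg hj]
    split
    case _ j'' heq =>
      obtain rfl : j'' = j' := by rw [hs] at heq; exact (Option.some.inj heq).symm
      split_ifs with h1
      · exact h1
      · rw [← (σ j : Sym2 V).out_eq] at hmem
        rcases Sym2.mem_iff.mp hmem with h2 | h2
        · exact absurd h2.symm h1
        · exact h2.symm
    case _ heq => rw [hs] at heq; cases heq

lemma emax_src_forced (hj : k ≤ (j : ℕ)) :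
    (emax σ hiso (src hσ hiso j) : ℕ) = (j : ℕ) := by
  have hle : ∀ l : Fin (Fintype.card G.edgeSet),
      src hσ hiso j ∈ (σ l : Sym2 V) → (l : ℕ) ≤ (j : ℕ) := by
    intro l hl
    by_contra hgt
    push_neg at hgt
    have hne : σ (fc hσ j) ≠ σ l := by
      intro hh
      have heq := σ.injective hh
      have := fc_lt hσ hj
      rw [heq] at this
      omega
    have hmemfc : src hσ hiso j ∈ (σ (fc hσ j) : Sym2 V) := by
      rw [src_forced hσ hiso hj]; exact piv_mem_fc hσ hj
    have hadj : G.lineGraph.Adj (σ (fc hσ j)) (σ l) :=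
      lineGraph_adj_iff_exists.mpr ⟨hne, _, hmemfc, hl⟩
    have := (fc_spec hσ hj l (le_of_lt hgt)).mp hadj
    rw [this] at hgt
    omega
  have h1 := le_emax (σ := σ) hiso (src_mem hσ hiso j)
  have h2 := hle _ (mem_emax (σ := σ) hiso (src hσ hiso j))
  omega

lemma lt_succ_of_mem_src {j j' : Fin (Fintype.card G.edgeSet)}
    (hj : ¬ k ≤ (j : ℕ)) (hs : succ hσ j = some j')
    {l : Fin (Fintype.card G.edgeSet)} (hl : src hσ hiso j ∈ (σ l : Sym2 V)) :
    (l : ℕ) < (j' : ℕ) := by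
  obtain ⟨hj', hfc, hlt⟩ := succ_spec hσ hs
  by_cases heq : σ l = σ j
  · have := σ.injective heq
    rw [this]
    exact hlt
  · have hadj : G.lineGraph.Adj (σ j) (σ l) :=
      lineGraph_adj_iff_exists.mpr ⟨Ne.symm heq, _, src_mem hσ hiso j, hl⟩
    rw [← hfc] at hadj
    by_contra hge
    push_neg at hge
    have hlj' := (fc_spec hσ hj' l hge).mp hadj
    have htm : tgt hσ hiso j ∈ (σ j' : Sym2 V) := by
      rw [tgt_of_succ hσ hiso hs]; exact piv_mem hσ _
    have hsm : src hσ hiso j ∈ (σ j' : Sym2 V) := by rwa [hlj'] at hl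
    have hj'eq : (σ j' : Sym2 V) = s(src hσ hiso j, tgt hσ hiso j) :=
      (Sym2.mem_and_mem_iff (src_ne_tgt hσ hiso j)).mp ⟨hsm, htm⟩
    rw [← edge_eq hσ hiso j] at hj'eq
    have : j' = j := σ.injective (Subtype.coe_injective hj'eq)
    rw [this] at hlt
    omega

/-- potential function on vertices -/
noncomputable def pot (v : V) : ℕ :=
  2 * (emax σ hiso v : ℕ) + (if tgt hσ hiso (emax σ hiso v) = v then 1 else 0)

lemma st_singleton (hj : ¬ k ≤ (j : ℕ)) (hs : succ hσ j = none) :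
    (emax σ hiso (src hσ hiso j) : ℕ) ≤ (emax σ hiso (tgt hσ hiso j) : ℕ) := by
  unfold src tgt st
  dsimp only
  rw [dif_neg hj]
  split
  case _ j'' heq => rw [hs] at heq; cases heq
  case _ heq =>
    split_ifs with h1
    · exact h1
    · push_neg at h1
      exact le_of_lt h1

lemma pot_src_lt (j : Fin (Fintype.card G.edgeSet)) :
    pot hσ hiso (src hσ hiso j) < pot hσ hiso (tgt hσ hiso j) := by
  by_cases hj : k ≤ (j : ℕ)
  · have hsrc := emax_src_forced hσ hiso hj
    cases hs : succ hσ j with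
    | some j' =>
        obtain ⟨hj', hfc, hlt⟩ := succ_spec hσ hs
        have htm : tgt hσ hiso j ∈ (σ j' : Sym2 V) := by
          rw [tgt_of_succ hσ hiso hs]; exact piv_mem hσ _
        have h2 := le_emax (σ := σ) hiso htm
        unfold pot
        split_ifs <;> omega
    | none =>
        have h2 := le_emax (σ := σ) hiso (tgt_mem hσ hiso j)
        rcases lt_or_eq_of_le h2 with h3 | h3
        · unfold pot; split_ifs <;> omega
        · have hemaxt : emax σ hiso (tgt hσ hiso j) = j := by
            apply Fin.ext; omega
          have hemaxs : emax σ hiso (src hσ hiso j) = j := by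
            apply Fin.ext; omega
          unfold pot
          rw [hemaxt, hemaxs]
          rw [if_pos rfl, if_neg (Ne.symm (src_ne_tgt hσ hiso j))]
          omega
  · cases hs : succ hσ j with
    | some j' =>
        obtain ⟨hj', hfc, hlt⟩ := succ_spec hσ hs
        have htm : tgt hσ hiso j ∈ (σ j' : Sym2 V) := by
          rw [tgt_of_succ hσ hiso hs]; exact piv_mem hσ _
        have h2 := le_emax (σ := σ) hiso htm
        have h3 := lt_succ_of_mem_src hσ hiso hj hs (mem_emax (σ := σ) hiso (src hσ hiso j))
        unfold pot
        split_ifs <;> omega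
    | none =>
        have h1 := st_singleton hσ hiso hj hs
        rcases lt_or_eq_of_le h1 with h2 | h2
        · unfold pot; split_ifs <;> omega
        · have hemax : emax σ hiso (src hσ hiso j) = emax σ hiso (tgt hσ hiso j) :=
            Fin.ext h2
          have hsm := mem_emax (σ := σ) hiso (src hσ hiso j)
          have htm := mem_emax (σ := σ) hiso (tgt hσ hiso j)
          rw [← hemax] at htm
          have hedge : (σ (emax σ hiso (src hσ hiso j)) : Sym2 V)
              = s(src hσ hiso j, tgt hσ hiso j) :=
            (Sym2.mem_and_mem_iff (src_ne_tgt hσ hiso j)).mp ⟨hsm, htm⟩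
          rw [← edge_eq hσ hiso j] at hedge
          have hsj : emax σ hiso (src hσ hiso j) = j :=
            σ.injective (Subtype.coe_injective hedge)
          unfold pot
          rw [← hemax, hsj]
          rw [if_neg (Ne.symm (src_ne_tgt hσ hiso j)), if_pos rfl]
          omega


/-- the orientation relation -/
def orel (hσ : IsZeroForcingOrder G.lineGraph k σ) (hiso : ∀ v : V, ∃ w : V, G.Adj v w)
    (u v : V) : Prop :=
  ∃ j : Fin (Fintype.card G.edgeSet), src hσ hiso j = u ∧ tgt hσ hiso j = v

lemma pot_mono {u v : V} (h : orel hσ hiso u v) : pot hσ hiso u < pot hσ hiso v := by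
  obtain ⟨j, rfl, rfl⟩ := h
  exact pot_src_lt hσ hiso j

/-- the vertex list of the chain starting at `j`, with fuel `n` -/
noncomputable def vlist (hσ : IsZeroForcingOrder G.lineGraph k σ)
    (hiso : ∀ v : V, ∃ w : V, G.Adj v w) :
    ℕ → Fin (Fintype.card G.edgeSet) → List V
  | 0, j => [src hσ hiso j, tgt hσ hiso j]
  | n + 1, j =>
      (succ hσ j).elim [src hσ hiso j, tgt hσ hiso j]
        (fun j' => src hσ hiso j :: vlist hσ hiso n j')

lemma vlist_succ_none {n : ℕ} (hs : succ hσ j = none) :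
    vlist hσ hiso (n + 1) j = [src hσ hiso j, tgt hσ hiso j] := by
  conv_lhs => rw [vlist]
  rw [hs]
  rfl

lemma vlist_succ_some {n : ℕ} {j' : Fin (Fintype.card G.edgeSet)} (hs : succ hσ j = some j') :
    vlist hσ hiso (n + 1) j = src hσ hiso j :: vlist hσ hiso n j' := by
  conv_lhs => rw [vlist]
  rw [hs]
  rfl

lemma vlist_head (n : ℕ) (j : Fin (Fintype.card G.edgeSet)) :
    ∃ t, vlist hσ hiso n j = src hσ hiso j :: t := by
  cases n with
  | zero => exact ⟨[tgt hσ hiso j], rfl⟩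
  | succ n =>
      cases hs : succ hσ j with
      | none => exact ⟨[tgt hσ hiso j], vlist_succ_none hσ hiso hs⟩
      | some j' => exact ⟨vlist hσ hiso n j', vlist_succ_some hσ hiso hs⟩

lemma vlist_chain (n : ℕ) : ∀ j : Fin (Fintype.card G.edgeSet),
    (vlist hσ hiso n j).Chain' (orel hσ hiso) := by
  induction n with
  | zero =>
      intro j
      simp only [vlist, List.Chain', List.isChain_cons_cons, List.isChain_singleton, and_true]
      exact ⟨j, rfl, rfl⟩
  | succ n ih =>
      intro j
      cases hs : succ hσ j with
      | none =>
          rw [vlist_succ_none hσ hiso hs]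
          simp only [List.Chain', List.isChain_cons_cons, List.isChain_singleton, and_true]
          exact ⟨j, rfl, rfl⟩
      | some j' =>
          rw [vlist_succ_some hσ hiso hs]
          obtain ⟨t, ht⟩ := vlist_head hσ hiso n j'
          rw [ht]
          rw [List.Chain', List.isChain_cons_cons]
          constructor
          · refine ⟨j, rfl, ?_⟩
            rw [tgt_of_succ hσ hiso hs, ← src_forced hσ hiso (succ_spec hσ hs).1]
          · rw [← ht]; exact ih j'

lemma rtg_le {j j'' : Fin (Fintype.card G.edgeSet)}
    (h : Relation.ReflTransGen (fun a b => succ hσ a = some b) j j'') :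
    (j : ℕ) ≤ (j'' : ℕ) := by
  induction h with
  | refl => exact le_rfl
  | tail _ h2 ih => exact ih.trans (le_of_lt (succ_spec hσ h2).2.2)

lemma vlist_cover (n : ℕ) : ∀ j j'' : Fin (Fintype.card G.edgeSet),
    Relation.ReflTransGen (fun a b => succ hσ a = some b) j j'' →
    (j'' : ℕ) ≤ (j : ℕ) + n →
    [src hσ hiso j'', tgt hσ hiso j''] <:+: vlist hσ hiso n j := by
  induction n with
  | zero =>
      intro j j'' h hle
      have h1 := rtg_le hσ h
      have : j = j'' := Fin.ext (by omega)
      subst this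
      exact List.infix_refl _
  | succ n ih =>
      intro j j'' h hle
      rcases h.cases_head with rfl | ⟨b, hb, h'⟩
      · cases hs : succ hσ j with
        | none => rw [vlist_succ_none hσ hiso hs]
        | some j' =>
            rw [vlist_succ_some hσ hiso hs]
            obtain ⟨t, ht⟩ := vlist_head hσ hiso n j'
            rw [ht]
            have hst : src hσ hiso j' = tgt hσ hiso j := by
              rw [tgt_of_succ hσ hiso hs, ← src_forced hσ hiso (succ_spec hσ hs).1]
            rw [hst]
            exact ⟨[], t, rfl⟩
      · have hlt := (succ_spec hσ hb).2.2
        rw [vlist_succ_some hσ hiso hb]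
        exact List.infix_cons (ih b j'' h' (by omega))

lemma exists_start (hk : 1 ≤ k) (j : Fin (Fintype.card G.edgeSet)) :
    ∃ p : Fin (Fintype.card G.edgeSet), (p : ℕ) < k ∧
      Relation.ReflTransGen (fun a b => succ hσ a = some b) p j := by
  have key : ∀ n : ℕ, ∀ j : Fin (Fintype.card G.edgeSet), (j : ℕ) ≤ n →
      ∃ p : Fin (Fintype.card G.edgeSet), (p : ℕ) < k ∧
        Relation.ReflTransGen (fun a b => succ hσ a = some b) p j := by
    intro n
    induction n with
    | zero =>
        intro j hj
        exact ⟨j, by omega, Relation.ReflTransGen.refl⟩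
    | succ n ih =>
        intro j hj
        by_cases hkj : k ≤ (j : ℕ)
        · have hlt := fc_lt hσ hkj
          obtain ⟨p, hp, hrtg⟩ := ih (fc hσ j) (by omega)
          exact ⟨p, hp, hrtg.tail (succ_eq_some hσ hkj rfl)⟩
        · exact ⟨j, by omega, Relation.ReflTransGen.refl⟩
  exact key (j : ℕ) j le_rfl

end BZAux

theorem brushingNumber_le_zeroForcingNumber_lineGraph
    {V : Type*} [Fintype V] [DecidableEq V] [Nonempty V]
    (G : SimpleGraph V) [DecidableRel G.Adj]
    (hiso : ∀ v : V, ∃ w : V, G.Adj v w) :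
    brushingNumber G ≤ zeroForcingNumber G.lineGraph := by
  classical
  have hNpos : 0 < Fintype.card G.edgeSet := by
    obtain ⟨w, hw⟩ := hiso (Classical.arbitrary V)
    have : Nonempty G.edgeSet := ⟨⟨s(Classical.arbitrary V, w), hw⟩⟩
    exact Fintype.card_pos
  have hne : {k | 1 ≤ k ∧ ∃ σ : Fin (Fintype.card G.edgeSet) ≃ G.edgeSet,
      IsZeroForcingOrder G.lineGraph k σ}.Nonempty := by
    refine ⟨Fintype.card G.edgeSet, hNpos, (Fintype.equivFin G.edgeSet).symm, ?_⟩
    intro j hj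
    exact absurd hj (by have := j.isLt; omega)
  have hmem := Nat.sInf_mem hne
  obtain ⟨hk1, σ, hσ⟩ := hmem
  set Z := zeroForcingNumber G.lineGraph with hZ
  have hZeq : Z = sInf {k | 1 ≤ k ∧ ∃ σ : Fin (Fintype.card G.edgeSet) ≃ G.edgeSet,
      IsZeroForcingOrder G.lineGraph k σ} := rfl
  rw [← hZeq] at hk1 hσ
  unfold brushingNumber
  apply Nat.sInf_le
  refine ⟨hk1, ?_⟩
  refine ⟨⟨BZAux.orel hσ hiso, ?_, ?_, ?_⟩, ?_, ?_⟩
  · rintro u v ⟨j, rfl, rfl⟩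
    have h1 := BZAux.edge_eq hσ hiso j
    have h2 := (σ j).2
    rw [h1] at h2
    exact (G.mem_edgeSet).mp h2
  · intro u v huv
    have hj : (σ (σ.symm ⟨s(u,v), huv⟩) : Sym2 V) = s(u,v) := by
      rw [Equiv.apply_symm_apply]
    rw [BZAux.edge_eq hσ hiso (σ.symm ⟨s(u,v), huv⟩)] at hj
    rcases Sym2.eq_iff.mp hj with ⟨h1, h2⟩ | ⟨h1, h2⟩
    · exact Or.inl ⟨_, h1, h2⟩
    · exact Or.inr ⟨_, h1, h2⟩
  · rintro u v ⟨j1, rfl, rfl⟩ ⟨j2, h1, h2⟩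
    have ha := BZAux.pot_src_lt hσ hiso j1
    have hb := BZAux.pot_src_lt hσ hiso j2
    rw [h1, h2] at hb
    omega
  · intro v hv
    have mono : ∀ a b : V, Relation.TransGen (BZAux.orel hσ hiso) a b →
        BZAux.pot hσ hiso a < BZAux.pot hσ hiso b := by
      intro a b h
      induction h with
      | single h => exact BZAux.pot_mono hσ hiso h
      | tail _ h ih => exact lt_trans ih (BZAux.pot_mono hσ hiso h)
    exact absurd (mono v v hv) (by omega)
  · refine ⟨fun i => if h : (i : ℕ) < Fintype.card G.edgeSet
        then BZAux.vlist hσ hiso (Fintype.card G.edgeSet) ⟨(i : ℕ), h⟩ else [], ?_, ?_⟩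
    · intro i
      dsimp only
      split_ifs with h
      · exact BZAux.vlist_chain hσ hiso _ _
      · exact List.isChain_nil
    · rintro u v ⟨j, rfl, rfl⟩
      obtain ⟨p, hp, hrtg⟩ := BZAux.exists_start hσ hk1 j
      refine ⟨⟨(p : ℕ), hp⟩, ?_⟩
      dsimp only
      rw [dif_pos p.isLt]
      have hpe : (⟨(p : ℕ), p.isLt⟩ : Fin (Fintype.card G.edgeSet)) = p := Fin.eta p p.isLt
      rw [hpe]
      exact BZAux.vlist_cover hσ hiso _ p j hrtg (by have := j.isLt; omega)
end

section
/- If G is a finite simple graph without isolated vertices, then the zero forcing number of G is at most the zero forcing number of the line graph of G, i.e., Z(G) ≤ Z(L(G)). -/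
set_option linter.unusedSectionVars false


open SimpleGraph

namespace ZFLG

variable {V : Type*} [Fintype V] [DecidableEq V]

/-- endpoints determine the edge -/
lemma sym2_eq_of_mems {e : Sym2 V} {x y : V} (hxy : x ≠ y) (hx : x ∈ e) (hy : y ∈ e) :
    e = s(x, y) :=
  (Sym2.mem_and_mem_iff hxy).1 ⟨hx, hy⟩

/-- the other endpoint of an edge -/
noncomputable def other {G : SimpleGraph V} (e : G.edgeSet) (v : V) : V := by
  classical exact if h : v ∈ (e : Sym2 V) then Sym2.Mem.other' h else v

variable {G : SimpleGraph V}

lemma other_mem {e : G.edgeSet} {v : V} (h : v ∈ (e : Sym2 V)) : other e v ∈ (e : Sym2 V) := by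
  rw [other, dif_pos h]; exact Sym2.other_mem' h

lemma other_ne {e : G.edgeSet} {v : V} (h : v ∈ (e : Sym2 V)) : other e v ≠ v := by
  rw [other, dif_pos h, ← Sym2.other_eq_other']
  exact Sym2.other_ne (G.not_isDiag_of_mem_edgeSet e.2) h

lemma other_spec {e : G.edgeSet} {v : V} (h : v ∈ (e : Sym2 V)) :
    s(v, other e v) = (e : Sym2 V) := by
  rw [other, dif_pos h]; exact Sym2.other_spec' h

lemma mem_other_iff {e : G.edgeSet} {v : V} (h : v ∈ (e : Sym2 V)) {w : V} :
    w ∈ (e : Sym2 V) ↔ w = v ∨ w = other e v := by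
  conv_lhs => rw [← other_spec h]
  simp [Sym2.mem_iff]

lemma other_of_mem {e : G.edgeSet} {v w : V} (hv : v ∈ (e : Sym2 V)) (hw : w ∈ (e : Sym2 V))
    (hne : w ≠ v) : other e v = w := by
  rcases (mem_other_iff hv).1 hw with h | h
  · exact absurd h hne
  · exact h.symm

lemma adj_of_mems {e : G.edgeSet} {x y : V} (hx : x ∈ (e : Sym2 V)) (hy : y ∈ (e : Sym2 V))
    (hxy : x ≠ y) : G.Adj x y := by
  have : (e : Sym2 V) = s(x, y) := sym2_eq_of_mems hxy hx hy
  have he := e.2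
  rw [this] at he
  exact (SimpleGraph.mem_edgeSet G).1 he

/-- All the data extracted from a zero forcing order of the line graph. -/
structure Data (G : SimpleGraph V) (k : ℕ) where
  idx : G.edgeSet → ℕ
  hinj : Function.Injective idx
  F : G.edgeSet → G.edgeSet
  sh : G.edgeSet → V
  hFlt : ∀ e, k ≤ idx e → idx (F e) < idx e
  hsh_mem_F : ∀ e, k ≤ idx e → sh e ∈ (F e : Sym2 V)
  hsh_mem : ∀ e, k ≤ idx e → sh e ∈ (e : Sym2 V)
  huniq : ∀ e, k ≤ idx e → ∀ e' : G.edgeSet, idx e ≤ idx e' → e' ≠ e →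
    ∀ x : V, x ∈ (F e : Sym2 V) → x ∈ (e' : Sym2 V) → False
  eT : V → G.edgeSet
  heT_mem : ∀ v, v ∈ (eT v : Sym2 V)
  heT_max : ∀ v (g : G.edgeSet), v ∈ (g : Sym2 V) → idx g ≤ idx (eT v)
  ell : V → ℕ
  hell : Function.Injective ell
  hell_lt : ∀ v, ell v < Fintype.card V

namespace Data

variable {k : ℕ} (D : Data G k)

/-- edges at the shared vertex are bounded -/
lemma f2 {e : G.edgeSet} (he : k ≤ D.idx e) {g : G.edgeSet} (hg : D.sh e ∈ (g : Sym2 V)) :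
    D.idx g ≤ D.idx e := by
  by_contra hlt
  push_neg at hlt
  exact D.huniq e he g hlt.le (fun h => hlt.ne (congrArg D.idx h).symm) _
    (D.hsh_mem_F e he) hg

/-- the shared vertex's maximal edge is the forced edge -/
lemma sh_eT {e : G.edgeSet} (he : k ≤ D.idx e) : D.eT (D.sh e) = e := by
  apply D.hinj
  have h1 : D.idx e ≤ D.idx (D.eT (D.sh e)) := D.heT_max _ e (D.hsh_mem e he)
  have h2 : D.idx (D.eT (D.sh e)) ≤ D.idx e := D.f2 he (D.heT_mem (D.sh e))
  omega

/-- sh is injective (on forced edges) -/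
lemma sh_inj {e e' : G.edgeSet} (he : k ≤ D.idx e) (he' : k ≤ D.idx e')
    (h : D.sh e = D.sh e') : e = e' := by
  have := D.sh_eT he
  have h2 := D.sh_eT he'
  rw [← h] at h2
  rw [← this, h2]

/-- F is injective on forced edges -/
lemma F_inj {e e' : G.edgeSet} (he : k ≤ D.idx e) (he' : k ≤ D.idx e')
    (h : D.F e = D.F e') : e = e' := by
  by_contra hne
  rcases lt_trichotomy (D.idx e) (D.idx e') with hlt | heq | hlt
  · refine D.huniq e he e' hlt.le (fun hh => hne hh.symm) (D.sh e')
      ?_ (D.hsh_mem e' he')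
    rw [h]; exact D.hsh_mem_F e' he'
  · exact hne (D.hinj heq)
  · refine D.huniq e' he' e hlt.le hne (D.sh e) ?_ (D.hsh_mem e he)
    rw [← h]; exact D.hsh_mem_F e he

/-- bound on edges at the other endpoint of the forcing edge -/
lemma obound {e : G.edgeSet} (he : k ≤ D.idx e) {g : G.edgeSet}
    (hg : other (D.F e) (D.sh e) ∈ (g : Sym2 V)) : D.idx g < D.idx e := by
  set o := other (D.F e) (D.sh e) with ho
  have hoF : o ∈ (D.F e : Sym2 V) := other_mem (D.hsh_mem_F e he)
  have hone : o ≠ D.sh e := other_ne (D.hsh_mem_F e he)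
  have honotE : o ∉ (e : Sym2 V) := by
    intro hoe
    have : (e : Sym2 V) = s(D.sh e, o) := sym2_eq_of_mems (Ne.symm hone) (D.hsh_mem e he) hoe
    have h2 : s(D.sh e, o) = (D.F e : Sym2 V) := other_spec (D.hsh_mem_F e he)
    have : (e : Sym2 V) = (D.F e : Sym2 V) := this.trans h2
    have heq : e = D.F e := Subtype.ext this
    have hflt := D.hFlt e he
    rw [← heq] at hflt
    omega
  by_contra hlt
  push_neg at hlt
  have hne : g ≠ e := fun h => honotE (h ▸ hg)
  exact D.huniq e he g hlt hne o hoF hg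


section Defs

open Classical in
/-- `v` is a shared vertex (of its own maximal edge, necessarily). -/
def isshv (v : V) : Prop := k ≤ D.idx (D.eT v) ∧ D.sh (D.eT v) = v

/-- the edge `g` forces something -/
def fires (g : G.edgeSet) : Prop := ∃ e' : G.edgeSet, k ≤ D.idx e' ∧ D.F e' = g

open Classical in
/-- placement level of a vertex -/
noncomputable def place (v : V) : ℕ :=
  if D.isshv v then D.idx (D.F (D.eT v)) else D.idx (D.eT v)

open Classical in
/-- the forcing duty of a vertex, if any -/
noncomputable def tgt (v : V) : Option V :=
  if hf : D.fires (D.eT v) then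
    (if k ≤ D.idx (D.eT v) then
      (if D.sh (D.eT v) = v then some (D.sh hf.choose) else none)
     else some (D.sh hf.choose))
  else
    (if k ≤ D.idx (D.eT v) then
      (if D.sh (D.eT v) = v ∧ D.eT (other (D.eT v) v) = D.eT v then
        some (other (D.eT v) v) else none)
     else
      (if D.eT (other (D.eT v) v) = D.eT v ∧ D.ell v < D.ell (other (D.eT v) v) then
        some (other (D.eT v) v) else none))

/-- base condition to be a non-initial vertex -/
def baseD (v : V) : Prop :=
  (D.isshv v ∧ (k ≤ D.idx (D.F (D.eT v)) ∨ D.eT (other (D.F (D.eT v)) v) = D.F (D.eT v)))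
  ∨ (¬ D.isshv v ∧ k ≤ D.idx (D.eT v))
  ∨ (¬ D.isshv v ∧ D.idx (D.eT v) < k ∧ ¬ D.fires (D.eT v) ∧
      D.eT (other (D.eT v) v) = D.eT v ∧ D.ell (other (D.eT v) v) < D.ell v)

/-- promoted vertices (removed from the forced part to fix conflicts) -/
def PROM (v : V) : Prop :=
  ∃ a : G.edgeSet, D.idx a < k ∧ v ∈ (a : Sym2 V) ∧ ¬ D.fires a ∧
    D.eT v ≠ a ∧ D.eT (other a v) ≠ a ∧
    ∃ t : V, D.tgt (other a v) = some t ∧ t ≠ v ∧ D.idx (D.eT (other a v)) ≤ D.place v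

/-- the non-initial (forced) vertices -/
def inD (v : V) : Prop := D.baseD v ∧ ¬ D.PROM v

end Defs

section Lemmas

lemma isshv_sh {e : G.edgeSet} (he : k ≤ D.idx e) : D.isshv (D.sh e) := by
  constructor
  · rw [D.sh_eT he]; exact he
  · rw [D.sh_eT he]

lemma place_isshv {v : V} (h : D.isshv v) : D.place v = D.idx (D.F (D.eT v)) := by
  rw [place, if_pos h]

lemma place_not_isshv {v : V} (h : ¬ D.isshv v) : D.place v = D.idx (D.eT v) := by
  rw [place, if_neg h]

lemma place_le_T (v : V) : D.place v ≤ D.idx (D.eT v) := by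
  by_cases h : D.isshv v
  · rw [D.place_isshv h]; exact (D.hFlt _ h.1).le
  · rw [D.place_not_isshv h]

lemma place_lt_T_of_isshv {v : V} (h : D.isshv v) : D.place v < D.idx (D.eT v) := by
  rw [D.place_isshv h]; exact D.hFlt _ h.1

/-- choose of fires is determined -/
lemma fires_choose {g : G.edgeSet} (hf : D.fires g) {e' : G.edgeSet}
    (h1 : k ≤ D.idx e') (h2 : D.F e' = g) : hf.choose = e' := by
  have hc := hf.choose_spec
  exact D.F_inj hc.1 h1 (hc.2.trans h2.symm)

/-- a never-shared vertex whose maximal edge is forced is not the shared vertex of it -/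
lemma not_sh_of_not_isshv {v : V} (hv : ¬ D.isshv v) (h : k ≤ D.idx (D.eT v)) :
    D.sh (D.eT v) ≠ v := fun hh => hv ⟨h, hh⟩

/-- the maximal edge of a `K2`-type vertex does not fire -/
lemma not_fires_of_ctype {v : V} (hv : ¬ D.isshv v) (h : k ≤ D.idx (D.eT v)) :
    ¬ D.fires (D.eT v) := by
  rintro ⟨e', he', hFe'⟩
  -- sh e' is in F e' = eT v, so it is v or the other endpoint sh (eT v)
  have hmem : D.sh e' ∈ ((D.eT v) : Sym2 V) := by rw [← hFe']; exact D.hsh_mem_F e' he'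
  have hv_mem : v ∈ ((D.eT v) : Sym2 V) := D.heT_mem v
  have hshv_mem : D.sh (D.eT v) ∈ ((D.eT v) : Sym2 V) := D.hsh_mem _ h
  have hlt : D.idx (D.eT v) < D.idx e' := by have := D.hFlt e' he'; rw [hFe'] at this; exact this
  rcases (mem_other_iff hv_mem).1 hmem with h1 | h1
  · -- sh e' = v : then eT v = e', contradiction with idx
    have := D.sh_eT he'
    rw [h1] at this
    have h3 := D.heT_max v e' (by rw [← h1]; exact D.hsh_mem e' he')
    omega
  · -- sh e' = other (eT v) v
    -- but sh (eT v) is also in eT v and ≠ v, so sh (eT v) = other (eT v) v = sh e'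
    have h2 : D.sh (D.eT v) = other (D.eT v) v :=
      (other_of_mem hv_mem hshv_mem (D.not_sh_of_not_isshv hv h)).symm
    have h3 : D.sh e' = D.sh (D.eT v) := by rw [h1, h2]
    have := D.sh_inj he' h h3
    rw [this] at hlt
    omega

end Lemmas

section Forcer

/-- the placement of a duty target equals the max-edge index of the duty holder -/
lemma place_tgt {v t : V} (h : D.tgt v = some t) : D.place t = D.idx (D.eT v) := by
  classical
  rw [tgt] at h
  split_ifs at h with hf h1 h2 h3 h4 h5
  · -- P1 : fires, forced eT v, sh (eT v) = v
    obtain ⟨he', hFe'⟩ := hf.choose_spec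
    have ht : t = D.sh hf.choose := (Option.some.inj h).symm
    subst ht
    have hisshv : D.isshv (D.sh hf.choose) := D.isshv_sh he'
    rw [D.place_isshv hisshv, D.sh_eT he', hFe']
  · -- P2
    obtain ⟨he', hFe'⟩ := hf.choose_spec
    have ht : t = D.sh hf.choose := (Option.some.inj h).symm
    subst ht
    have hisshv : D.isshv (D.sh hf.choose) := D.isshv_sh he'
    rw [D.place_isshv hisshv, D.sh_eT he', hFe']
  · -- P3
    have ht : t = other (D.eT v) v := (Option.some.inj h).symm
    subst ht
    have hnot : ¬ D.isshv (other (D.eT v) v) := by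
      rintro ⟨-, hsh⟩
      rw [h4.2, h4.1] at hsh
      exact (other_ne (D.heT_mem v)) hsh.symm
    rw [D.place_not_isshv hnot, h4.2]
    done
  · -- P4
    have ht : t = other (D.eT v) v := (Option.some.inj h).symm
    subst ht
    have hnot : ¬ D.isshv (other (D.eT v) v) := by
      rintro ⟨hh1, -⟩
      rw [h5.1] at hh1
      exact h3 hh1
    rw [D.place_not_isshv hnot, h5.1]

/-- every forced vertex has a forcer -/
lemma exists_forcer {d : V} (hd : D.inD d) :
    ∃ u, D.tgt u = some d ∧ u ≠ d ∧ G.Adj u d ∧ (¬ D.inD u ∨ D.place u < D.place d) := by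
  classical
  rcases hd.1 with ⟨hdss, hcase⟩ | ⟨hdnot, hdT⟩ | ⟨hdnot, hdlt, hdnf, hdo, hdell⟩
  · -- demoted shared vertex
    set g := D.F (D.eT d) with hg
    have hdT : k ≤ D.idx (D.eT d) := hdss.1
    have hdsh : D.sh (D.eT d) = d := hdss.2
    have hdmem_g : d ∈ (g : Sym2 V) := by rw [← hdsh]; exact D.hsh_mem_F _ hdT
    have hfg : D.fires g := ⟨D.eT d, hdT, rfl⟩
    have hglt : D.idx g < D.idx (D.eT d) := D.hFlt _ hdT
    by_cases hgF : k ≤ D.idx g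
    · -- g itself forced : forcer is sh g
      refine ⟨D.sh g, ?_, ?_, ?_, Or.inr ?_⟩
      · rw [tgt]
        have heTg : D.eT (D.sh g) = g := D.sh_eT hgF
        have hfires : D.fires (D.eT (D.sh g)) := by rw [heTg]; exact hfg
        rw [dif_pos hfires, if_pos (by rw [heTg]; exact hgF), if_pos (by rw [heTg])]
        have : hfires.choose = D.eT d := D.fires_choose hfires hdT (by rw [heTg])
        rw [this, hdsh]
      · intro hh
        have : g = D.eT d := D.sh_inj hgF hdT (by rw [hh, hdsh])
        rw [this] at hglt; omega
      · exact adj_of_mems (D.hsh_mem _ hgF) hdmem_g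
          (fun hh => by
            have : g = D.eT d := D.sh_inj hgF hdT (by rw [hh, hdsh])
            rw [this] at hglt; omega)
      · have hisshv : D.isshv (D.sh g) := D.isshv_sh hgF
        rw [D.place_isshv hisshv, D.sh_eT hgF, D.place_isshv hdss, ← hg]
        exact D.hFlt _ hgF
    · -- g in B with new other endpoint : forcer is other g d
      have hgB : D.eT (other g d) = g := hcase.resolve_left hgF
      push_neg at hgF
      set u := other g d with hu
      have humem : u ∈ (g : Sym2 V) := other_mem hdmem_g
      have hune : u ≠ d := other_ne hdmem_g
      refine ⟨u, ?_, hune, adj_of_mems humem hdmem_g hune, Or.inl ?_⟩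
      · rw [tgt]
        have hfires : D.fires (D.eT u) := by rw [hgB]; exact hfg
        rw [dif_pos hfires, if_neg (by rw [hgB]; omega)]
        have : hfires.choose = D.eT d := D.fires_choose hfires hdT (by rw [hgB])
        rw [this, hdsh]
      · rintro ⟨hbase, -⟩
        rcases hbase with ⟨huss, -⟩ | ⟨-, huT⟩ | ⟨-, -, hunf, -, -⟩
        · have := huss.1; rw [hgB] at this; omega
        · rw [hgB] at huT; omega
        · rw [hgB] at hunf; exact hunf hfg
  · -- K2-type new vertex of a forced edge : forcer is sh (eT d)
    have humem : D.sh (D.eT d) ∈ ((D.eT d) : Sym2 V) := D.hsh_mem _ hdT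
    have hune : D.sh (D.eT d) ≠ d := D.not_sh_of_not_isshv hdnot hdT
    have heTu : D.eT (D.sh (D.eT d)) = D.eT d := D.sh_eT hdT
    have hother : other (D.eT d) (D.sh (D.eT d)) = d :=
      other_of_mem humem (D.heT_mem d) (Ne.symm hune)
    refine ⟨D.sh (D.eT d), ?_, hune, adj_of_mems humem (D.heT_mem d) hune, Or.inr ?_⟩
    · rw [tgt]
      have hnf : ¬ D.fires (D.eT (D.sh (D.eT d))) := by
        rw [heTu]; exact D.not_fires_of_ctype hdnot hdT
      rw [dif_neg hnf, if_pos (by rw [heTu]; exact hdT), if_pos ?_]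
      · rw [heTu, hother]
      · rw [heTu]
        exact ⟨rfl, by rw [hother]⟩
    · have hisshv : D.isshv (D.sh (D.eT d)) := D.isshv_sh hdT
      rw [D.place_isshv hisshv, heTu, D.place_not_isshv hdnot]
      exact D.hFlt _ hdT
  · -- non-min endpoint of an isolated new edge : forcer is the other (min) endpoint
    have humem : other (D.eT d) d ∈ ((D.eT d) : Sym2 V) := other_mem (D.heT_mem d)
    have hune : other (D.eT d) d ≠ d := other_ne (D.heT_mem d)
    have hother : other (D.eT d) (other (D.eT d) d) = d :=
      other_of_mem humem (D.heT_mem d) (Ne.symm hune)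
    refine ⟨other (D.eT d) d, ?_, hune, adj_of_mems humem (D.heT_mem d) hune, Or.inl ?_⟩
    · rw [tgt]
      have hnf : ¬ D.fires (D.eT (other (D.eT d) d)) := by rw [hdo]; exact hdnf
      rw [dif_neg hnf, if_neg (by rw [hdo]; omega), if_pos ?_]
      · rw [hdo, hother]
      · rw [hdo, hother]
        exact ⟨rfl, hdell⟩
    · rintro ⟨hbase, -⟩
      rcases hbase with ⟨huss, -⟩ | ⟨-, huT⟩ | ⟨-, -, -, -, huell⟩
      · have := huss.1; rw [hdo] at this; omega
      · rw [hdo] at huT; omega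
      · rw [hdo, hother] at huell; omega

end Forcer

section Main

/-- THE MAIN LEMMA: neighbours of a duty holder other than its target are placed
before the target. -/
lemma main_lemma {v t : V} (h : D.tgt v = some t) {a : G.edgeSet} (hva : v ∈ (a : Sym2 V))
    {w : V} (hwa : w ∈ (a : Sym2 V)) (hwv : w ≠ v) (hwt : w ≠ t) (hw : D.inD w) :
    D.place w < D.idx (D.eT v) := by
  classical
  have hw_other : other a v = w := other_of_mem hva hwa hwv
  have hv_other : other a w = v := other_of_mem hwa hva (Ne.symm hwv)
  have ha_le : D.idx a ≤ D.idx (D.eT v) := D.heT_max v a hva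
  by_cases hak : k ≤ D.idx a
  · -- the edge a is forced
    have hsha : D.sh a ∈ (a : Sym2 V) := D.hsh_mem a hak
    rcases (mem_other_iff hva).1 hsha with hsv | hsw
    · -- sh a = v : then a = eT v, contradictions via the tgt cases
      exfalso
      have haeT : D.eT v = a := by rw [← hsv]; exact D.sh_eT hak
      have hkeT : k ≤ D.idx (D.eT v) := by rw [haeT]; exact hak
      rw [tgt] at h
      by_cases hf : D.fires (D.eT v)
      · rw [dif_pos hf, if_pos hkeT] at h
        by_cases h2 : D.sh (D.eT v) = v
        · rw [if_pos h2] at h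
          -- P1 : t = sh e₀ with F e₀ = eT v
          obtain ⟨he₀, hFe₀⟩ := hf.choose_spec
          have ht : t = D.sh hf.choose := (Option.some.inj h).symm
          generalize hgen : hf.choose = e₀ at he₀ hFe₀ ht
          have hmem : D.sh e₀ ∈ (a : Sym2 V) := by
            have h1 : D.sh e₀ ∈ (D.F e₀ : Sym2 V) := D.hsh_mem_F _ he₀
            rw [hFe₀, haeT] at h1
            exact h1
          rcases (mem_other_iff hva).1 hmem with hh | hh
          · -- sh e₀ = v : impossible
            have h3 : D.eT v = e₀ := by rw [← hh]; exact D.sh_eT he₀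
            have hlt := D.hFlt _ he₀
            rw [hFe₀, h3] at hlt
            omega
          · rw [hw_other] at hh
            exact hwt (by rw [ht, ← hh])
        · rw [if_neg h2] at h
          exact (Option.some_ne_none t h.symm).elim
      · rw [dif_neg hf, if_pos hkeT] at h
        by_cases h4 : D.sh (D.eT v) = v ∧ D.eT (other (D.eT v) v) = D.eT v
        · rw [if_pos h4] at h
          -- P3 : t = other (eT v) v = w
          have ht : t = other (D.eT v) v := (Option.some.inj h).symm
          rw [haeT, hw_other] at ht
          exact hwt ht.symm
        · rw [if_neg h4] at h
          exact (Option.some_ne_none t h.symm).elim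
    · -- sh a = w : w is a freshly demoted shared vertex
      rw [hw_other] at hsw
      have heTw : D.eT w = a := by rw [← hsw]; exact D.sh_eT hak
      have hisshw : D.isshv w := by rw [← hsw]; exact D.isshv_sh hak
      have hlt : D.idx a < D.idx (D.eT v) := by
        rcases lt_or_eq_of_le ha_le with hh | hh
        · exact hh
        · -- idx a = idx (eT v) : a = eT v; but then tgt v = none, contradiction
          exfalso
          have haeT' : D.eT v = a := (D.hinj hh).symm
          have hsh' : D.sh (D.eT v) ≠ v := by rw [haeT', hsw]; exact hwv
          have hkeT : k ≤ D.idx (D.eT v) := by rw [haeT']; exact hak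
          rw [tgt] at h
          by_cases hf : D.fires (D.eT v)
          · rw [dif_pos hf, if_pos hkeT, if_neg hsh'] at h
            exact (Option.some_ne_none t h.symm).elim
          · rw [dif_neg hf, if_pos hkeT, if_neg (fun hc => hsh' hc.1)] at h
            exact (Option.some_ne_none t h.symm).elim
      calc D.place w = D.idx (D.F (D.eT w)) := D.place_isshv hisshw
        _ < D.idx (D.eT w) := D.hFlt _ (by rw [heTw]; exact hak)
        _ = D.idx a := by rw [heTw]
        _ < D.idx (D.eT v) := hlt
  · -- the edge a is in B
    push_neg at hak
    by_cases hfa : D.fires a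
    · obtain ⟨e₀, he₀, hFe₀⟩ := hfa
      have hmem : D.sh e₀ ∈ (a : Sym2 V) := by rw [← hFe₀]; exact D.hsh_mem_F _ he₀
      rcases (mem_other_iff hva).1 hmem with hsv | hsw
      · -- sh e₀ = v : use the obound
        have heTv : D.eT v = e₀ := by rw [← hsv]; exact D.sh_eT he₀
        have hwb : other (D.F e₀) (D.sh e₀) = w := by rw [hsv, hFe₀, hw_other]
        have hob : D.idx (D.eT w) < D.idx e₀ := D.obound he₀ (by rw [hwb]; exact D.heT_mem w)
        calc D.place w ≤ D.idx (D.eT w) := D.place_le_T w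
          _ < D.idx e₀ := hob
          _ = D.idx (D.eT v) := by rw [heTv]
      · -- sh e₀ = w : w demoted at a
        rw [hw_other] at hsw
        have heTw : D.eT w = e₀ := by rw [← hsw]; exact D.sh_eT he₀
        have hisshw : D.isshv w := by rw [← hsw]; exact D.isshv_sh he₀
        have hpw : D.place w = D.idx a := by
          rw [D.place_isshv hisshw, heTw, hFe₀]
        rcases lt_or_eq_of_le ha_le with hh | hh
        · omega
        · -- idx a = idx (eT v) : then t = sh e₀ = w, contradiction
          exfalso
          have haeT : a = D.eT v := D.hinj hh
          have hfv : D.fires (D.eT v) := ⟨e₀, he₀, by rw [← haeT]; exact hFe₀⟩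
          rw [tgt, dif_pos hfv, if_neg (by rw [← haeT]; omega)] at h
          have ht : t = D.sh hfv.choose := (Option.some.inj h).symm
          have : hfv.choose = e₀ := D.fires_choose hfv he₀ (by rw [← haeT]; exact hFe₀)
          rw [this, hsw] at ht
          exact hwt ht.symm
    · -- a does not fire
      by_cases hwnew : D.eT w = a
      · -- w is new at a : from baseD w, the only possibility forces t = w
        exfalso
        rcases hw.1 with ⟨hss, -⟩ | ⟨-, hT⟩ | ⟨-, -, -, ho, hell⟩
        · have := hss.1; rw [hwnew] at this; omega
        · rw [hwnew] at hT; omega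
        · -- eT (other (eT w) w) = eT w gives eT v = a, and v's tgt is then w
          rw [hwnew, hv_other] at ho hell
          -- ho : D.eT v = a, hell : ell v < ell w
          rw [tgt] at h
          rw [dif_neg (by rw [ho]; exact hfa), if_neg (by rw [ho]; omega),
            if_pos (by rw [ho, hw_other, hwnew]; exact ⟨rfl, hell⟩)] at h
          have ht : t = other (D.eT v) v := (Option.some.inj h).symm
          rw [ho, hw_other] at ht
          exact hwt ht.symm
      · by_cases hvnew : D.eT v = a
        · -- v new at a but w old : tgt v would be none
          exfalso
          rw [tgt] at h
          rw [dif_neg (by rw [hvnew]; exact hfa), if_neg (by rw [hvnew]; omega),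
            if_neg (by rw [hvnew, hw_other]; exact fun hc => hwnew hc.1)] at h
          exact (Option.some_ne_none t h.symm).elim
        · -- both old : the PROM mechanism
          by_contra hcon
          push_neg at hcon
          exact hw.2 ⟨a, hak, hwa, hfa, hwnew, by rw [hv_other]; exact hvnew,
            t, by rw [hv_other]; exact h, Ne.symm hwt, by rw [hv_other]; exact hcon⟩

end Main

section PlaceInj

lemma place_inj_aux {d₁ d₂ : V} (h1 : D.isshv d₁) (h2 : ¬ D.isshv d₂) (hd2 : D.inD d₂)
    (h : D.place d₁ = D.place d₂) : False := by
  classical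
  rw [D.place_isshv h1, D.place_not_isshv h2] at h
  have hg : D.F (D.eT d₁) = D.eT d₂ := D.hinj h
  set g := D.F (D.eT d₁) with hgdef
  have hd1mem : d₁ ∈ (g : Sym2 V) := by
    have hmm := D.hsh_mem_F _ h1.1
    rw [h1.2] at hmm
    exact hmm
  have hd2mem : d₂ ∈ (g : Sym2 V) := by rw [hg]; exact D.heT_mem d₂
  have hfg : D.fires g := ⟨D.eT d₁, h1.1, rfl⟩
  have hne : d₁ ≠ d₂ := by
    rintro rfl
    exact h2 h1
  have hoth : other g d₁ = d₂ := other_of_mem hd1mem hd2mem (Ne.symm hne)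
  by_cases hgk : k ≤ D.idx g
  · have hshg : D.sh g ∈ (g : Sym2 V) := D.hsh_mem g hgk
    rcases (mem_other_iff hd1mem).1 hshg with hh | hh
    · have : g = D.eT d₁ := D.sh_inj hgk h1.1 (by rw [hh, h1.2])
      have hlt := D.hFlt _ h1.1
      rw [← hgdef, this] at hlt
      omega
    · rw [hoth] at hh
      exact h2 ⟨by rw [← hg]; exact hgk, by rw [← hg, ← hh]⟩
  · rcases hd2.1 with ⟨hss, -⟩ | ⟨-, hT⟩ | ⟨-, -, hnf, -, -⟩
    · exact h2 hss
    · rw [← hg] at hT; omega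
    · rw [← hg] at hnf; exact hnf hfg

lemma place_inj {d₁ d₂ : V} (hd1 : D.inD d₁) (hd2 : D.inD d₂)
    (h : D.place d₁ = D.place d₂) : d₁ = d₂ := by
  classical
  by_cases h1 : D.isshv d₁ <;> by_cases h2 : D.isshv d₂
  · rw [D.place_isshv h1, D.place_isshv h2] at h
    have : D.F (D.eT d₁) = D.F (D.eT d₂) := D.hinj h
    have heq : D.eT d₁ = D.eT d₂ := D.F_inj h1.1 h2.1 this
    rw [← h1.2, ← h2.2, heq]
  · exact absurd (D.place_inj_aux h1 h2 hd2 h) not_false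
  · exact absurd (D.place_inj_aux h2 h1 hd1 h.symm) not_false
  · rw [D.place_not_isshv h1, D.place_not_isshv h2] at h
    have heq : D.eT d₁ = D.eT d₂ := D.hinj h
    by_contra hne
    have hd1mem : d₁ ∈ ((D.eT d₁) : Sym2 V) := D.heT_mem d₁
    have hd2mem : d₂ ∈ ((D.eT d₁) : Sym2 V) := by rw [heq]; exact D.heT_mem d₂
    have hoth1 : other (D.eT d₁) d₁ = d₂ := other_of_mem hd1mem hd2mem (Ne.symm hne)
    have hoth2 : other (D.eT d₂) d₂ = d₁ := by
      rw [← heq]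
      exact other_of_mem hd2mem hd1mem hne
    by_cases hk : k ≤ D.idx (D.eT d₁)
    · have hshg : D.sh (D.eT d₁) ∈ ((D.eT d₁) : Sym2 V) := D.hsh_mem _ hk
      rcases (mem_other_iff hd1mem).1 hshg with hh | hh
      · exact h1 ⟨hk, hh⟩
      · rw [hoth1] at hh
        exact h2 ⟨by rw [← heq]; exact hk, by rw [← heq, hh]⟩
    · push_neg at hk
      by_cases hf : D.fires (D.eT d₁)
      · obtain ⟨e₀, he₀, hFe₀⟩ := hf
        have hmem : D.sh e₀ ∈ ((D.eT d₁) : Sym2 V) := by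
          rw [← hFe₀]; exact D.hsh_mem_F _ he₀
        have hlt : D.idx (D.eT d₁) < D.idx e₀ := by
          have := D.hFlt _ he₀; rw [hFe₀] at this; exact this
        rcases (mem_other_iff hd1mem).1 hmem with hh | hh
        · have : D.eT d₁ = e₀ := by
            have h3 := D.sh_eT he₀
            rw [hh] at h3
            have h4 := D.heT_max d₁ e₀ (by rw [← hh]; exact D.hsh_mem _ he₀)
            omega
          rw [this] at hlt; omega
        · rw [hoth1] at hh
          have : D.eT d₂ = e₀ := by
            have h3 := D.sh_eT he₀
            rw [hh] at h3
            have h4 := D.heT_max d₂ e₀ (by rw [← hh]; exact D.hsh_mem _ he₀)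
            rw [← heq] at h4 ⊢
            omega
          rw [heq, this] at hlt; omega
      · rcases hd1.1 with ⟨hss, -⟩ | ⟨-, hT⟩ | ⟨-, -, -, -, hell1⟩
        · exact h1 hss
        · omega
        · rcases hd2.1 with ⟨hss, -⟩ | ⟨-, hT⟩ | ⟨-, -, -, -, hell2⟩
          · exact h2 hss
          · rw [← heq] at hT; omega
          · rw [hoth1] at hell1
            rw [hoth2] at hell2
            omega

end PlaceInj

section Card

open Classical in
/-- assignment of initial vertices to early edges -/
noncomputable def psi (v : V) : G.edgeSet :=
  if h : D.PROM v then h.choose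
  else if D.isshv v then D.F (D.eT v) else D.eT v

/-- a vertex not in `D` has its `psi`-edge early -/
lemma psi_lt {v : V} (hv : ¬ D.inD v) : D.idx (D.psi v) < k := by
  classical
  rw [psi]
  split_ifs with hp hs
  · exact hp.choose_spec.1
  · have hb : ¬ D.baseD v := fun hb => hv ⟨hb, hp⟩
    by_contra hh
    push_neg at hh
    exact hb (Or.inl ⟨hs, Or.inl hh⟩)
  · have hb : ¬ D.baseD v := fun hb => hv ⟨hb, hp⟩
    by_contra hh
    push_neg at hh
    exact hb (Or.inr (Or.inl ⟨hs, hh⟩))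

lemma S1_facts {v : V} (hv : ¬ D.inD v) (hp : ¬ D.PROM v) (hs : D.isshv v) :
    D.idx (D.F (D.eT v)) < k ∧ D.eT (other (D.F (D.eT v)) v) ≠ D.F (D.eT v) := by
  have hb : ¬ D.baseD v := fun hb => hv ⟨hb, hp⟩
  constructor
  · by_contra hh
    push_neg at hh
    exact hb (Or.inl ⟨hs, Or.inl hh⟩)
  · intro hh
    exact hb (Or.inl ⟨hs, Or.inr hh⟩)

lemma S2_facts {v : V} (hv : ¬ D.inD v) (hp : ¬ D.PROM v) (hs : ¬ D.isshv v) :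
    D.idx (D.eT v) < k ∧ (D.fires (D.eT v) ∨ D.eT (other (D.eT v) v) ≠ D.eT v ∨
      ¬ (D.ell (other (D.eT v) v) < D.ell v)) := by
  have hb : ¬ D.baseD v := fun hb => hv ⟨hb, hp⟩
  have hlt : D.idx (D.eT v) < k := by
    by_contra hh
    push_neg at hh
    exact hb (Or.inr (Or.inl ⟨hs, hh⟩))
  refine ⟨hlt, ?_⟩
  by_contra hh
  push_neg at hh
  obtain ⟨hf, ho, he⟩ := hh
  exact hb (Or.inr (Or.inr ⟨hs, hlt, hf, ho, he⟩))

/-- common-edge contradiction for PROM and a vertex whose psi is the same edge -/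
lemma prom_edge_absurd {v₁ v₂ : V} (hp1 : D.PROM v₁) {a : G.edgeSet}
    (ha : hp1.choose = a) (hne : v₁ ≠ v₂) (hv2a : v₂ ∈ (a : Sym2 V))
    (heTv2 : D.eT v₂ = a) : False := by
  obtain ⟨-, hv1a, -, -, hoth, -⟩ := hp1.choose_spec
  rw [ha] at hv1a hoth
  rw [other_of_mem hv1a hv2a (Ne.symm hne)] at hoth
  exact hoth heTv2

lemma psi_inj {v₁ v₂ : V} (hv1 : ¬ D.inD v₁) (hv2 : ¬ D.inD v₂)
    (h : D.psi v₁ = D.psi v₂) : v₁ = v₂ := by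
  classical
  by_contra hne
  rw [psi, psi] at h
  by_cases hp1 : D.PROM v₁ <;> by_cases hp2 : D.PROM v₂
  · -- both PROM
    rw [dif_pos hp1, dif_pos hp2] at h
    obtain ⟨hak1, hv1a, hnf1, hne1, hno1, t₁, ht1, ht1ne, hle1⟩ := hp1.choose_spec
    obtain ⟨hak2, hv2a, hnf2, hne2, hno2, t₂, ht2, ht2ne, hle2⟩ := hp2.choose_spec
    rw [← h] at hv2a hne2 ht2 hle2
    set a := hp1.choose with hadef
    have ho1 : other a v₁ = v₂ := other_of_mem hv1a hv2a (Ne.symm hne)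
    have ho2 : other a v₂ = v₁ := other_of_mem hv2a hv1a hne
    rw [ho1] at ht1 hle1
    rw [ho2] at ht2 hle2
    have hp1T := D.place_le_T v₁
    have hp2T := D.place_le_T v₂
    -- all four quantities are equal
    have heq : D.idx (D.eT v₁) = D.idx (D.eT v₂) := by omega
    have heTeq : D.eT v₁ = D.eT v₂ := D.hinj heq
    have h1m : v₁ ∈ ((D.eT v₁) : Sym2 V) := D.heT_mem v₁
    have h2m : v₂ ∈ ((D.eT v₁) : Sym2 V) := by rw [heTeq]; exact D.heT_mem v₂
    have : (D.eT v₁ : Sym2 V) = (a : Sym2 V) := by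
      rw [sym2_eq_of_mems hne h1m h2m, sym2_eq_of_mems hne hv1a hv2a]
    exact hne1 (Subtype.ext this)
  · -- v₁ PROM, v₂ not
    rw [dif_pos hp1, dif_neg hp2] at h
    by_cases hs2 : D.isshv v₂
    · rw [if_pos hs2] at h
      obtain ⟨-, -, hnf1, -, -, -⟩ := hp1.choose_spec
      rw [h] at hnf1
      exact hnf1 ⟨D.eT v₂, hs2.1, rfl⟩
    · rw [if_neg hs2] at h
      have hv2a : v₂ ∈ ((hp1.choose : G.edgeSet) : Sym2 V) := by
        rw [h]; exact D.heT_mem v₂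
      exact D.prom_edge_absurd hp1 rfl hne hv2a h.symm
  · -- v₂ PROM, v₁ not
    rw [dif_neg hp1, dif_pos hp2] at h
    by_cases hs1 : D.isshv v₁
    · rw [if_pos hs1] at h
      obtain ⟨-, -, hnf2, -, -, -⟩ := hp2.choose_spec
      rw [← h] at hnf2
      exact hnf2 ⟨D.eT v₁, hs1.1, rfl⟩
    · rw [if_neg hs1] at h
      have hv1a : v₁ ∈ ((hp2.choose : G.edgeSet) : Sym2 V) := by
        rw [← h]; exact D.heT_mem v₁
      exact D.prom_edge_absurd hp2 rfl (Ne.symm hne) hv1a h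
  · -- neither PROM
    rw [dif_neg hp1, dif_neg hp2] at h
    by_cases hs1 : D.isshv v₁ <;> by_cases hs2 : D.isshv v₂
    · rw [if_pos hs1, if_pos hs2] at h
      have heq : D.eT v₁ = D.eT v₂ := D.F_inj hs1.1 hs2.1 h
      exact hne (by rw [← hs1.2, ← hs2.2, heq])
    · rw [if_pos hs1, if_neg hs2] at h
      have hv1a : v₁ ∈ ((D.F (D.eT v₁)) : Sym2 V) := by
        have hmm := D.hsh_mem_F _ hs1.1
        rw [hs1.2] at hmm
        exact hmm
      have hv2a : v₂ ∈ ((D.F (D.eT v₁)) : Sym2 V) := by rw [h]; exact D.heT_mem v₂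
      have hoth : other (D.F (D.eT v₁)) v₁ = v₂ := other_of_mem hv1a hv2a (Ne.symm hne)
      have := (D.S1_facts hv1 hp1 hs1).2
      rw [hoth] at this
      exact this h.symm
    · rw [if_neg hs1, if_pos hs2] at h
      have hv2a : v₂ ∈ ((D.F (D.eT v₂)) : Sym2 V) := by
        have hmm := D.hsh_mem_F _ hs2.1
        rw [hs2.2] at hmm
        exact hmm
      have hv1a : v₁ ∈ ((D.F (D.eT v₂)) : Sym2 V) := by rw [← h]; exact D.heT_mem v₁
      have hoth : other (D.F (D.eT v₂)) v₂ = v₁ := other_of_mem hv2a hv1a hne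
      have := (D.S1_facts hv2 hp2 hs2).2
      rw [hoth] at this
      exact this h
    · rw [if_neg hs1, if_neg hs2] at h
      -- both never-shared, same maximal edge
      have h1m : v₁ ∈ ((D.eT v₁) : Sym2 V) := D.heT_mem v₁
      have h2m : v₂ ∈ ((D.eT v₁) : Sym2 V) := by rw [h]; exact D.heT_mem v₂
      have ho1 : other (D.eT v₁) v₁ = v₂ := other_of_mem h1m h2m (Ne.symm hne)
      have ho2 : other (D.eT v₂) v₂ = v₁ := by
        rw [← h]; exact other_of_mem h2m h1m hne
      have hfire_absurd : ¬ D.fires (D.eT v₁) := by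
        rintro ⟨e₀, he₀, hFe₀⟩
        have hmem : D.sh e₀ ∈ ((D.eT v₁) : Sym2 V) := by
          rw [← hFe₀]; exact D.hsh_mem_F _ he₀
        have hlt : D.idx (D.eT v₁) < D.idx e₀ := by
          have := D.hFlt _ he₀; rw [hFe₀] at this; exact this
        rcases (mem_other_iff h1m).1 hmem with hh | hh
        · have h3 := D.heT_max v₁ e₀ (by rw [← hh]; exact D.hsh_mem _ he₀)
          omega
        · rw [ho1] at hh
          have h3 := D.heT_max v₂ e₀ (by rw [← hh]; exact D.hsh_mem _ he₀)
          rw [← h] at h3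
          omega
      rcases (D.S2_facts hv1 hp1 hs1).2 with hf | ho | he
      · exact hfire_absurd hf
      · rw [ho1] at ho
        exact ho h.symm
      · rcases (D.S2_facts hv2 hp2 hs2).2 with hf | ho' | he'
        · rw [← h] at hf
          exact hfire_absurd hf
        · rw [ho2, ← h] at ho'
          exact ho' rfl
        · rw [ho1] at he
          rw [ho2] at he'
          have : D.ell v₁ = D.ell v₂ := by omega
          exact hne (D.hell this)


open Classical in
lemma card_not_inD_le : (Finset.univ.filter fun v => ¬ D.inD v).card ≤ k := by
  classical
  have := Finset.card_le_card_of_injOn (fun v => D.idx (D.psi v))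
    (s := Finset.univ.filter fun v => ¬ D.inD v) (t := Finset.range k)
    (fun v hv => by
      simp only [Finset.coe_filter, Finset.mem_coe, Finset.mem_filter, Finset.mem_univ, true_and, Set.mem_setOf_eq] at hv
      simp only [Finset.mem_coe, Finset.mem_range]
      exact D.psi_lt hv)
    (fun v₁ h₁ v₂ h₂ hh => by
      simp only [Finset.coe_filter, Finset.mem_univ, true_and, Set.mem_setOf_eq] at h₁ h₂
      exact D.psi_inj h₁ h₂ (D.hinj hh))
  simpa using this

end Card
end Data

/-- The core construction: from the data of a zero forcing order of the line graph,
produce a zero forcing order of `G` itself with the same parameter. -/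
theorem core {G : SimpleGraph V} {k : ℕ} (hkn : k ≤ Fintype.card V) (D : Data G k)
    (ZFO : ∀ (H : SimpleGraph V) (k' : ℕ) (σ : Fin (Fintype.card V) ≃ V), Prop)
    (hZFO : ∀ (H : SimpleGraph V) (k' : ℕ) (σ : Fin (Fintype.card V) ≃ V),
      (∀ j : Fin (Fintype.card V), k' ≤ (j : ℕ) →
        ∃ i : Fin (Fintype.card V), (i : ℕ) < (j : ℕ) ∧
          ∀ l : Fin (Fintype.card V), (j : ℕ) ≤ (l : ℕ) → (H.Adj (σ i) (σ l) ↔ l = j)) →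
      ZFO H k' σ) :
    ∃ σ : Fin (Fintype.card V) ≃ V, ZFO G k σ := by
  classical
  set n := Fintype.card V with hn
  set Sfin : Finset V := Finset.univ.filter (fun v => ¬ D.inD v) with hSfin
  have hScard : Sfin.card ≤ k := D.card_not_inD_le
  obtain ⟨Spad, hSsub, -, hSpadcard⟩ :=
    Finset.exists_subsuperset_card_eq (Finset.subset_univ Sfin) hScard
      (by rw [Finset.card_univ]; exact hkn)
  set key : V → ℕ := fun v => if v ∈ Spad then D.ell v else n + D.place v with hkey
  have hkeyinj : Function.Injective key := by
    intro u v huv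
    by_cases hu : u ∈ Spad <;> by_cases hv : v ∈ Spad <;>
      simp only [hkey, if_pos, if_neg, hu, hv, if_true, if_false] at huv
    · exact D.hell huv
    · have := D.hell_lt u; omega
    · have := D.hell_lt v; omega
    · have hplace : D.place u = D.place v := by omega
      have hiu : D.inD u := by
        have : u ∉ Sfin := fun hh => hu (hSsub hh)
        simpa [hSfin] using this
      have hiv : D.inD v := by
        have : v ∉ Sfin := fun hh => hv (hSsub hh)
        simpa [hSfin] using this
      exact D.place_inj hiu hiv hplace
  letI : LinearOrder V := LinearOrder.lift' key hkeyinj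
  have hle_iff : ∀ u v : V, u ≤ v ↔ key u ≤ key v := fun _ _ => Iff.rfl
  have hlt_iff : ∀ u v : V, u < v ↔ key u < key v := by
    intro u v
    rw [lt_iff_le_not_ge, Nat.lt_iff_le_not_le, hle_iff, hle_iff]
  have hcarduniv : (Finset.univ : Finset V).card = n := by rw [Finset.card_univ]
  set σ₀ := Finset.univ.orderIsoOfFin hcarduniv with hσ₀
  set σ : Fin n ≃ V :=
    σ₀.toEquiv.trans (Equiv.subtypeUnivEquiv (fun x => Finset.mem_univ x)) with hσ
  have hσval : ∀ i : Fin n, σ i = (σ₀ i : V) := fun i => rfl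
  have hmono : ∀ i j : Fin n, i < j ↔ key (σ i) < key (σ j) := by
    intro i j
    rw [← hlt_iff]
    constructor
    · intro hij
      have := σ₀.lt_iff_lt.2 hij
      exact Subtype.coe_lt_coe.2 this
    · intro hij
      exact σ₀.lt_iff_lt.1 (Subtype.coe_lt_coe.1 hij)
  -- first k positions are exactly Spad
  have hpos : ∀ j : Fin n, σ j ∈ Spad ↔ (j : ℕ) < k := by
    set A : Finset (Fin n) := Finset.univ.filter (fun i => σ i ∈ Spad) with hA
    have hAcard : A.card = k := by
      rw [← hSpadcard]
      apply Finset.card_bij (fun i _ => σ i)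
      · intro i hi
        simp only [hA, Finset.mem_filter] at hi
        exact hi.2
      · intro i hi i' hi' hh
        exact σ.injective hh
      · intro v hv
        refine ⟨σ.symm v, ?_, by simp⟩
        simp only [hA, Finset.mem_filter, Finset.mem_univ, true_and,
          Equiv.apply_symm_apply]
        exact hv
    have hsep : ∀ i ∈ A, ∀ j : Fin n, j ∉ A → i < j := by
      intro i hi j hj
      simp only [hA, Finset.mem_filter, Finset.mem_univ, true_and] at hi hj
      rw [hmono]
      have h1 : key (σ i) = D.ell (σ i) := by rw [hkey]; simp [hi]
      have h2 : key (σ j) = n + D.place (σ j) := by rw [hkey]; simp [hj]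
      have := D.hell_lt (σ i)
      omega
    intro j
    constructor
    · intro hj
      by_contra hcon
      push_neg at hcon
      -- all positions ≤ j are in A, so k + 1 ≤ card A
      have hsub : Finset.range ((j : ℕ) + 1) ⊆ A.image (Fin.val) := by
        intro m hm
        simp only [Finset.mem_range] at hm
        have hmn : m < n := by have := j.isLt; omega
        refine Finset.mem_image.2 ⟨⟨m, hmn⟩, ?_, rfl⟩
        by_contra hmA
        have hlt := hsep j (Finset.mem_filter.2 ⟨Finset.mem_univ _, hj⟩) ⟨m, hmn⟩ hmA
        rw [Fin.lt_def] at hlt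
        simp only at hlt
        omega
      have hcard2 := Finset.card_le_card hsub
      rw [Finset.card_range, Finset.card_image_of_injective _ Fin.val_injective,
        hAcard] at hcard2
      omega
    · intro hj
      by_contra hcon
      have hsub : A.image (Fin.val) ⊆ Finset.range (j : ℕ) := by
        intro m hm
        simp only [Finset.mem_image] at hm
        obtain ⟨i, hi, rfl⟩ := hm
        simp only [Finset.mem_range]
        refine hsep i hi j ?_
        simp only [hA, Finset.mem_filter, Finset.mem_univ, true_and]
        exact hcon
      have := Finset.card_le_card hsub
      rw [Finset.card_image_of_injective _ Fin.val_injective, hAcard,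
        Finset.card_range] at this
      omega
  have hinD_of_not_pad : ∀ v : V, v ∉ Spad → D.inD v := by
    intro v hv
    by_contra hcon
    exact hv (hSsub (by simp [hSfin, hcon]))
  refine ⟨σ, hZFO _ _ _ ?_⟩
  intro j hjk
  have hdnot : σ j ∉ Spad := by
    rw [hpos j]
    omega
  have hdinD : D.inD (σ j) := hinD_of_not_pad _ hdnot
  obtain ⟨u, htgt, hune, hadj, hstat⟩ := D.exists_forcer hdinD
  have hσu : σ (σ.symm u) = u := σ.apply_symm_apply u
  refine ⟨σ.symm u, ?_, ?_⟩
  · -- position of the forcer is earlier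
    by_cases hu : u ∈ Spad
    · have hlt : ((σ.symm u : Fin n) : ℕ) < k := by
        rw [← hpos (σ.symm u), hσu]; exact hu
      omega
    · rcases hstat with hni | hpl
      · exact absurd (hinD_of_not_pad u hu) hni
      · have hkeys : key (σ (σ.symm u)) < key (σ j) := by
          rw [hσu, hkey]
          simp only [if_neg hu, if_neg hdnot]
          omega
        have := (hmono _ _).2 hkeys
        exact Fin.lt_def.1 this
  · intro l hl
    rw [hσu]
    constructor
    · intro hadj_l
      by_contra hlj
      have hjl : (j : ℕ) < (l : ℕ) := by
        have : (l : ℕ) ≠ (j : ℕ) := fun hh => hlj (Fin.ext hh)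
        omega
      have hwpad : σ l ∉ Spad := by
        rw [hpos l]
        omega
      have hwinD : D.inD (σ l) := hinD_of_not_pad _ hwpad
      have hwu : σ l ≠ u := (hadj_l.ne).symm
      have hwt : σ l ≠ σ j := fun hh => hlj (σ.injective hh)
      have ha_edge : s(u, σ l) ∈ G.edgeSet := G.mem_edgeSet.2 hadj_l
      have hml := D.main_lemma htgt (a := ⟨s(u, σ l), ha_edge⟩)
        (Sym2.mem_mk_left u (σ l)) (Sym2.mem_mk_right u (σ l)) hwu hwt hwinD
      have hpt := D.place_tgt htgt
      have hkeys : key (σ j) < key (σ l) := (hmono j l).1 (Fin.lt_def.2 hjl)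
      rw [hkey] at hkeys
      simp only [if_neg hdnot, if_neg hwpad] at hkeys
      omega
    · intro hlj
      rw [hlj]
      exact hadj


/-- Build the `Data` from a zero forcing order of the line graph. -/
theorem data_of_lineGraph (G : SimpleGraph V) [Nonempty V] [Fintype G.edgeSet]
    (hiso : ∀ v : V, ∃ w : V, G.Adj v w) (k : ℕ)
    (σL : Fin (Fintype.card G.edgeSet) ≃ G.edgeSet)
    (hσL : ∀ j : Fin (Fintype.card G.edgeSet), k ≤ (j : ℕ) →
      ∃ i : Fin (Fintype.card G.edgeSet), (i : ℕ) < (j : ℕ) ∧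
        ∀ l : Fin (Fintype.card G.edgeSet), (j : ℕ) ≤ (l : ℕ) →
          ((G.lineGraph).Adj (σL i) (σL l) ↔ l = j)) :
    Nonempty (Data G k) := by
  classical
  set idx : G.edgeSet → ℕ := fun e => (σL.symm e : ℕ) with hidx
  have hinj : Function.Injective idx := by
    intro e e' h
    have : σL.symm e = σL.symm e' := Fin.ext h
    exact σL.symm.injective this
  have H : ∀ e : G.edgeSet, k ≤ idx e →
      ∃ f : G.edgeSet, idx f < idx e ∧ (∃ x : V, x ∈ (f : Sym2 V) ∧ x ∈ (e : Sym2 V)) ∧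
        ∀ e' : G.edgeSet, idx e ≤ idx e' → e' ≠ e →
          ∀ x : V, x ∈ (f : Sym2 V) → x ∈ (e' : Sym2 V) → False := by
    intro e he
    obtain ⟨i, hi, hcond⟩ := hσL (σL.symm e) he
    refine ⟨σL i, ?_, ?_, ?_⟩
    · rw [hidx]
      simp only [Equiv.symm_apply_apply]
      exact hi
    · have := (hcond (σL.symm e) le_rfl).2 (by simp)
      rw [Equiv.apply_symm_apply] at this
      rw [lineGraph_adj_iff_exists] at this
      exact this.2
    · intro e' hle hne x hx hx'
      have hAdj : (G.lineGraph).Adj (σL i) e' := by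
        rw [lineGraph_adj_iff_exists]
        refine ⟨?_, x, hx, hx'⟩
        intro hfe
        rw [← hfe] at hle
        rw [hidx] at hle
        simp only [Equiv.symm_apply_apply] at hle
        omega
      have := (hcond (σL.symm e') (by exact hle)).1 (by rw [Equiv.apply_symm_apply]; exact hAdj)
      exact hne (by
        have := congrArg σL this
        rw [Equiv.apply_symm_apply, Equiv.apply_symm_apply] at this
        exact this)
  choose F0 hlt0 hex0 huniq0 using H
  have hT : ∀ v : V, ∃ e : G.edgeSet, v ∈ (e : Sym2 V) ∧
      ∀ g : G.edgeSet, v ∈ (g : Sym2 V) → idx g ≤ idx e := by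
    intro v
    obtain ⟨w, hw⟩ := hiso v
    have hne : (Finset.univ.filter fun e : G.edgeSet => v ∈ (e : Sym2 V)).Nonempty := by
      refine ⟨⟨s(v, w), G.mem_edgeSet.2 hw⟩, ?_⟩
      simp only [Finset.mem_filter, Finset.mem_univ, true_and]
      exact Sym2.mem_mk_left v w
    obtain ⟨e, he, hmax⟩ := Finset.exists_max_image _ idx hne
    simp only [Finset.mem_filter, Finset.mem_univ, true_and] at he
    refine ⟨e, he, fun g hg => hmax g ?_⟩
    simp only [Finset.mem_filter, Finset.mem_univ, true_and]
    exact hg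
  choose eT heT_mem heT_max using hT
  refine ⟨{
    idx := idx
    hinj := hinj
    F := fun e => if h : k ≤ idx e then F0 e h else e
    sh := fun e => if h : k ≤ idx e then (hex0 e h).choose else Classical.arbitrary V
    hFlt := fun e h => by
      show idx (if h : k ≤ idx e then F0 e h else e) < idx e
      rw [dif_pos h]; exact hlt0 e h
    hsh_mem_F := fun e h => by
      show (if h : k ≤ idx e then (hex0 e h).choose else Classical.arbitrary V) ∈
        ((if h : k ≤ idx e then F0 e h else e : G.edgeSet) : Sym2 V)
      rw [dif_pos h, dif_pos h]; exact (hex0 e h).choose_spec.1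
    hsh_mem := fun e h => by
      show (if h : k ≤ idx e then (hex0 e h).choose else Classical.arbitrary V) ∈
        ((e : G.edgeSet) : Sym2 V)
      rw [dif_pos h]; exact (hex0 e h).choose_spec.2
    huniq := fun e h e' hle hne x hx hx' => by
      have hx2 : x ∈ ((F0 e h : G.edgeSet) : Sym2 V) := by
        have : (if h : k ≤ idx e then F0 e h else e) = F0 e h := dif_pos h
        rw [← this]
        exact hx
      exact huniq0 e h e' hle hne x hx2 hx'
    eT := eT
    heT_mem := heT_mem
    heT_max := heT_max
    ell := fun v => ((Fintype.equivFin V) v : ℕ)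
    hell := fun u v h => (Fintype.equivFin V).injective (Fin.ext h)
    hell_lt := fun v => ((Fintype.equivFin V) v).isLt }⟩

end ZFLG

theorem zeroForcingNumber_le_zeroForcingNumber_lineGraph
    {V : Type*} [Fintype V] [DecidableEq V] [Nonempty V]
    (G : SimpleGraph V) [DecidableRel G.Adj]
    (hiso : ∀ v : V, ∃ w : V, G.Adj v w) :
    zeroForcingNumber G ≤ zeroForcingNumber G.lineGraph := by
  classical
  have hVpos : 1 ≤ Fintype.card V := Fintype.card_pos
  have hGn : Fintype.card V ∈
      {k | 1 ≤ k ∧ ∃ σ : Fin (Fintype.card V) ≃ V, IsZeroForcingOrder G k σ} := by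
    refine ⟨hVpos, (Fintype.equivFin V).symm, ?_⟩
    intro j hj
    exact absurd j.isLt (by omega)
  have hEne : Nonempty G.edgeSet := by
    obtain ⟨w, hw⟩ := hiso (Classical.arbitrary V)
    exact ⟨⟨s(Classical.arbitrary V, w), G.mem_edgeSet.2 hw⟩⟩
  have hm1 : 1 ≤ Fintype.card G.edgeSet := Fintype.card_pos
  have hLne : {k | 1 ≤ k ∧ ∃ σ : Fin (Fintype.card G.edgeSet) ≃ G.edgeSet,
      IsZeroForcingOrder G.lineGraph k σ}.Nonempty := by
    refine ⟨Fintype.card G.edgeSet, hm1, (Fintype.equivFin _).symm, ?_⟩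
    intro j hj
    exact absurd j.isLt (by omega)
  obtain ⟨hk1, σL, hσL⟩ := Nat.sInf_mem hLne
  have hkdef : zeroForcingNumber G.lineGraph =
      sInf {k | 1 ≤ k ∧ ∃ σ : Fin (Fintype.card G.edgeSet) ≃ G.edgeSet,
        IsZeroForcingOrder G.lineGraph k σ} := rfl
  rcases le_or_gt (Fintype.card V) (zeroForcingNumber G.lineGraph) with hc | hc
  · exact le_trans (Nat.sInf_le hGn) hc
  · obtain ⟨D⟩ := ZFLG.data_of_lineGraph G hiso
      (sInf {k | 1 ≤ k ∧ ∃ σ : Fin (Fintype.card G.edgeSet) ≃ G.edgeSet,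
        IsZeroForcingOrder G.lineGraph k σ}) σL hσL
    rw [hkdef] at hc
    obtain ⟨σ, hσ⟩ := ZFLG.core hc.le D (fun H k' σ => IsZeroForcingOrder H k' σ)
      (fun H k' σ h => h)
    rw [hkdef]
    exact Nat.sInf_le ⟨hk1, σ, hσ⟩
end

section
/- Let H be a finite simple graph with n vertices and let Z = {u_1,…,u_k} be a zero forcing set of H with an associated forcing order u_{k+1},…,u_n. Then the vertex set of H can be partitioned into k paths P_1,…,P_k (the forcing chains), where for each i in [k] the path P_i starts at u_i and each vertex of P_i forces the next vertex of P_i, and moreover each forcing chain P_i is an induced path in H. -/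
open SimpleGraph

/-- With respect to the forcing order `σ` (whose first `k` vertices form the zero forcing set),
the vertex `a` forces the vertex `b`: `a = σ i`, `b = σ j` with `i < j`, `k ≤ j`, and `σ j` is
the unique neighbor of `σ i` contained in `{σ j, σ (j+1), …}`. -/
def Forces {V : Type*} [Fintype V] (H : SimpleGraph V) (k : ℕ)
    (σ : Fin (Fintype.card V) ≃ V) (a b : V) : Prop :=
  ∃ i j : Fin (Fintype.card V), σ i = a ∧ σ j = b ∧ (i : ℕ) < (j : ℕ) ∧ k ≤ (j : ℕ) ∧
    ∀ l : Fin (Fintype.card V), (j : ℕ) ≤ (l : ℕ) → (H.Adj a (σ l) ↔ l = j)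

set_option linter.unusedSectionVars false

namespace ZFAux

def chainFrom {α : Type*} (next : α → Option α) : ℕ → α → List α
  | 0, p => [p]
  | m+1, p => p :: ((next p).elim [] (chainFrom next m))

variable {n : ℕ} {next : Fin n → Option (Fin n)}

lemma mem_self (fuel : ℕ) (p : Fin n) : p ∈ chainFrom next fuel p := by
  cases fuel <;> simp [chainFrom]

lemma head_eq (fuel : ℕ) (p : Fin n) : (chainFrom next fuel p).head? = some p := by
  cases fuel <;> rfl

variable (hnext : ∀ p q : Fin n, next p = some q → (p : ℕ) < (q : ℕ))
include hnext

lemma le_of_mem (fuel : ℕ) : ∀ p q : Fin n, q ∈ chainFrom next fuel p → (p : ℕ) ≤ (q : ℕ) := by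
  induction fuel with
  | zero => intro p q hq; simp [chainFrom] at hq; simp [hq]
  | succ m ih =>
    intro p q hq
    rw [chainFrom, List.mem_cons] at hq
    rcases hq with h | h
    · simp [h]
    · cases hc : next p with
      | none => rw [hc] at h; simp at h
      | some c =>
        rw [hc] at h; simp at h
        exact le_of_lt (lt_of_lt_of_le (hnext p c hc) (ih c q h))

lemma nodup (fuel : ℕ) : ∀ p : Fin n, (chainFrom next fuel p).Nodup := by
  induction fuel with
  | zero => intro p; simp [chainFrom]
  | succ m ih =>
    intro p
    rw [chainFrom]
    refine List.nodup_cons.2 ⟨?_, ?_⟩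
    · cases hc : next p with
      | none => simp
      | some c =>
        simp only [hc, Option.elim]
        intro hmem
        exact absurd (le_of_mem hnext m c p hmem) (not_le.2 (hnext p c hc))
    · cases hc : next p with
      | none => simp
      | some c => simp only [hc, Option.elim]; exact ih c

lemma chain'_of {R : Fin n → Fin n → Prop} (hR : ∀ a b, next a = some b → R a b)
    (fuel : ℕ) : ∀ p : Fin n, (chainFrom next fuel p).Chain' R := by
  induction fuel with
  | zero => intro p; simp [chainFrom, List.Chain', List.isChain_singleton]
  | succ m ih =>
    intro p
    rw [chainFrom]
    cases hc : next p with
    | none => simp [List.Chain', List.isChain_singleton]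
    | some c =>
      simp only [hc, Option.elim]
      refine List.isChain_cons.2 ⟨?_, ih c⟩
      intro y hy
      rw [head_eq] at hy
      cases hy
      exact hR p c hc

lemma mem_next (fuel : ℕ) : ∀ p a b : Fin n, n ≤ fuel + (p : ℕ) →
    a ∈ chainFrom next fuel p → next a = some b → b ∈ chainFrom next fuel p := by
  induction fuel with
  | zero => intro p _ _ hle; exact absurd p.isLt (not_lt.2 (by simpa using hle))
  | succ m ih =>
    intro p a b hle ha hab
    rw [chainFrom, List.mem_cons] at ha ⊢
    rcases ha with rfl | ha
    · right; rw [hab]; simp only [Option.elim]; exact mem_self m b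
    · cases hc : next p with
      | none => rw [hc] at ha; simp at ha
      | some c =>
        rw [hc] at ha; simp only [Option.elim] at ha ⊢
        right
        exact ih c a b (by have := hnext p c hc; omega) ha hab

lemma decomp (fuel : ℕ) : ∀ r p : Fin n, p ∈ chainFrom next fuel r →
    p = r ∨ ∃ q : Fin n, next q = some p ∧ q ∈ chainFrom next fuel r := by
  induction fuel with
  | zero => intro r p hp; simp [chainFrom] at hp; exact Or.inl hp
  | succ m ih =>
    intro r p hp
    rw [chainFrom, List.mem_cons] at hp
    rcases hp with rfl | hp
    · exact Or.inl rfl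
    · cases hc : next r with
      | none => rw [hc] at hp; simp at hp
      | some c =>
        rw [hc] at hp; simp only [Option.elim] at hp
        rcases ih c p hp with rfl | ⟨q, hq1, hq2⟩
        · exact Or.inr ⟨r, hc, by rw [chainFrom]; exact List.mem_cons_self⟩
        · refine Or.inr ⟨q, hq1, ?_⟩
          rw [chainFrom, hc]; simp only [Option.elim]
          exact List.mem_cons_of_mem _ hq2

lemma between (fuel : ℕ) : ∀ r p q : Fin n, p ∈ chainFrom next fuel r →
    q ∈ chainFrom next fuel r → (p : ℕ) < (q : ℕ) →
    ∃ c : Fin n, next p = some c ∧ (c : ℕ) ≤ (q : ℕ) := by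
  induction fuel with
  | zero =>
    intro r p q hp hq hlt
    simp [chainFrom] at hp hq
    subst hp; subst hq; omega
  | succ m ih =>
    intro r p q hp hq hlt
    rw [chainFrom, List.mem_cons] at hp hq
    cases hc : next r with
    | none =>
      rw [hc] at hp hq; simp at hp hq
      subst hp; subst hq; omega
    | some c =>
      rw [hc] at hp hq; simp only [Option.elim] at hp hq
      rcases hp with rfl | hp
      · rcases hq with rfl | hq
        · omega
        · exact ⟨c, hc, le_of_mem hnext m c q hq⟩
      · rcases hq with rfl | hq
        · have := le_of_mem hnext m c p hp
          have := hnext _ c hc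
          omega
        · exact ih c p q hp hq hlt

lemma infix_next (fuel : ℕ) : ∀ r a b : Fin n, n ≤ fuel + (r : ℕ) →
    a ∈ chainFrom next fuel r → next a = some b → [a, b] <:+: chainFrom next fuel r := by
  induction fuel with
  | zero => intro r _ _ hle; exact absurd r.isLt (not_lt.2 (by simpa using hle))
  | succ m ih =>
    intro r a b hle ha hab
    rw [chainFrom, List.mem_cons] at ha
    rcases ha with rfl | ha
    · rw [chainFrom, hab]; simp only [Option.elim]
      obtain ⟨t, ht⟩ : ∃ t, chainFrom next m b = b :: t := by
        cases m <;> exact ⟨_, rfl⟩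
      rw [ht]
      exact ⟨[], t, rfl⟩
    · cases hc : next r with
      | none => rw [hc] at ha; simp at ha
      | some c =>
        rw [hc] at ha; simp only [Option.elim] at ha
        have hinf := ih c a b (by have := hnext _ c hc; omega) ha hab
        refine hinf.trans ?_
        rw [chainFrom, hc]; simp only [Option.elim]
        exact (List.suffix_cons r _).isInfix

end ZFAux

open ZFAux in
/-- The vertex set of `H` can be partitioned into `k` forcing chains `Q 0, …, Q (k-1)`:
`Q i` is a duplicate-free list starting at the `i`-th vertex `σ i` of the zero forcing set,
every vertex appears in exactly one chain, each vertex of a chain forces the next one, and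
each chain is an induced path of `H`. -/
theorem forcing_chains_partition {V : Type*} [Fintype V] (H : SimpleGraph V)
    (k : ℕ) (hk : k ≤ Fintype.card V) (σ : Fin (Fintype.card V) ≃ V)
    (hσ : IsZeroForcingOrder H k σ) :
    ∃ Q : Fin k → List V,
      (∀ i : Fin k, (Q i).head? = some (σ ⟨(i : ℕ), lt_of_lt_of_le i.isLt hk⟩)) ∧
      (∀ i : Fin k, (Q i).Nodup) ∧
      (∀ v : V, ∃! i : Fin k, v ∈ Q i) ∧
      (∀ i : Fin k, (Q i).Chain' (Forces H k σ)) ∧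
      (∀ i : Fin k, (Q i).Chain' H.Adj) ∧
      (∀ i : Fin k, ∀ a ∈ Q i, ∀ b ∈ Q i,
        H.Adj a b → ([a, b] <:+: Q i ∨ [b, a] <:+: Q i)) := by
  classical
  have hσ' : ∀ j : Fin (Fintype.card V), k ≤ (j : ℕ) →
      ∃ i : Fin (Fintype.card V), (i : ℕ) < (j : ℕ) ∧
        ∀ l : Fin (Fintype.card V), (j : ℕ) ≤ (l : ℕ) → (H.Adj (σ i) (σ l) ↔ l = j) := hσ
  choose F hFlt hFspec using hσ'
  -- injectivity of the forcer map
  have key : ∀ (j j' : Fin (Fintype.card V)) (h : k ≤ (j:ℕ)) (h' : k ≤ (j':ℕ)),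
      F j h = F j' h' → (j:ℕ) < (j':ℕ) → False := by
    intro j j' h h' he hlt
    have h1 := hFspec j h j' (le_of_lt hlt)
    have h2 := hFspec j' h' j' le_rfl
    rw [he] at h1
    have hadj : H.Adj (σ (F j' h')) (σ j') := h2.2 rfl
    have hje : j' = j := h1.1 hadj
    rw [hje] at hlt
    exact lt_irrefl _ hlt
  have hFinj : ∀ (j j' : Fin (Fintype.card V)) (h : k ≤ (j:ℕ)) (h' : k ≤ (j':ℕ)),
      F j h = F j' h' → j = j' := by
    intro j j' h h' he
    by_contra hne
    have hvne : (j:ℕ) ≠ (j':ℕ) := fun hv => hne (Fin.ext hv)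
    rcases Nat.lt_or_ge (j:ℕ) (j':ℕ) with hlt | hge
    · exact key j j' h h' he hlt
    · exact key j' j h' h he.symm (lt_of_le_of_ne hge (fun hv => hvne hv.symm))
  -- the (partial, inverted) forcing map as an Option-valued successor function
  obtain ⟨child, hchild1, hchild2⟩ :
      ∃ child : Fin (Fintype.card V) → Option (Fin (Fintype.card V)),
        (∀ p q, child p = some q → ∃ hq : k ≤ (q:ℕ), F q hq = p) ∧
        (∀ (q : Fin (Fintype.card V)) (hq : k ≤ (q:ℕ)), child (F q hq) = some q) := by
    refine ⟨fun p => if h : ∃ q : Fin (Fintype.card V), ∃ hq : k ≤ (q:ℕ), F q hq = p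
      then some h.choose else none, ?_, ?_⟩
    · intro p q hpq
      by_cases h : ∃ q : Fin (Fintype.card V), ∃ hq : k ≤ (q:ℕ), F q hq = p
      · simp only [dif_pos h, Option.some.injEq] at hpq
        rw [← hpq]
        exact h.choose_spec
      · simp only [dif_neg h] at hpq
        simp at hpq
    · intro q hq
      have hex : ∃ q' : Fin (Fintype.card V), ∃ hq' : k ≤ (q':ℕ), F q' hq' = F q hq :=
        ⟨q, hq, rfl⟩
      simp only [dif_pos hex, Option.some.injEq]
      obtain ⟨hq', he⟩ := hex.choose_spec
      exact hFinj _ _ hq' hq he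
  have hnext : ∀ p q : Fin (Fintype.card V), child p = some q → (p:ℕ) < (q:ℕ) := by
    intro p q hpq
    obtain ⟨hq, he⟩ := hchild1 p q hpq
    rw [← he]
    exact hFlt q hq
  set R : Fin k → Fin (Fintype.card V) :=
    fun i => ⟨(i : ℕ), lt_of_lt_of_le i.isLt hk⟩ with hR
  set L : Fin k → List (Fin (Fintype.card V)) :=
    fun i => chainFrom child (Fintype.card V) (R i) with hL
  have hmem : ∀ (v : V) (i : Fin k), v ∈ (L i).map σ ↔ σ.symm v ∈ L i := by
    intro v i
    rw [List.mem_map]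
    constructor
    · rintro ⟨a, ha, rfl⟩; simpa using ha
    · intro h; exact ⟨_, h, σ.apply_symm_apply v⟩
  -- existence of a chain containing any given position
  have exists_mem : ∀ m : ℕ, ∀ p : Fin (Fintype.card V), (p:ℕ) = m → ∃ i : Fin k, p ∈ L i := by
    intro m
    induction m using Nat.strong_induction_on with
    | _ m ih =>
      intro p hp
      by_cases hpk : (p:ℕ) < k
      · refine ⟨⟨(p:ℕ), hpk⟩, ?_⟩
        have hRe : R ⟨(p:ℕ), hpk⟩ = p := Fin.ext rfl
        rw [hL]
        simpa [hRe] using mem_self (next := child) (Fintype.card V) p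
      · push_neg at hpk
        obtain ⟨i, hi⟩ := ih ((F p hpk : Fin (Fintype.card V)) : ℕ)
          (by rw [← hp]; exact hFlt p hpk) (F p hpk) rfl
        exact ⟨i, mem_next hnext _ _ _ _ (Nat.le_add_right _ _) hi (hchild2 p hpk)⟩
  -- uniqueness of the chain containing any given position
  have unique_mem : ∀ m : ℕ, ∀ p : Fin (Fintype.card V), (p:ℕ) = m →
      ∀ i i' : Fin k, p ∈ L i → p ∈ L i' → i = i' := by
    intro m
    induction m using Nat.strong_induction_on with
    | _ m ih =>
      intro p hp i i' hi hi'
      by_cases hpk : (p:ℕ) < k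
      · rcases decomp hnext _ _ _ hi with heq | ⟨q, hq1, hq2⟩
        · rcases decomp hnext _ _ _ hi' with heq' | ⟨q', hq1', hq2'⟩
          · apply Fin.ext
            have e1 : (p:ℕ) = (i:ℕ) := congrArg Fin.val heq
            have e2 : (p:ℕ) = (i':ℕ) := congrArg Fin.val heq'
            omega
          · obtain ⟨hqk, _⟩ := hchild1 q' p hq1'
            omega
        · obtain ⟨hqk, _⟩ := hchild1 q p hq1
          omega
      · push_neg at hpk
        have hne : ∀ j : Fin k, p ≠ R j := by
          intro j h
          have : (p:ℕ) = (j:ℕ) := congrArg Fin.val h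
          have := j.isLt
          omega
        rcases decomp hnext _ _ _ hi with heq | ⟨q, hq1, hq2⟩
        · exact absurd heq (hne i)
        rcases decomp hnext _ _ _ hi' with heq' | ⟨q', hq1', hq2'⟩
        · exact absurd heq' (hne i')
        obtain ⟨hqk, hFe⟩ := hchild1 q p hq1
        obtain ⟨hqk', hFe'⟩ := hchild1 q' p hq1'
        have hqq : q = q' := by rw [← hFe, ← hFe']
        rw [← hqq] at hq2'
        have hqlt : (q:ℕ) < m := by rw [← hFe, ← hp]; exact hFlt p hqk
        exact ih (q:ℕ) hqlt q rfl i i' hq2 hq2'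
  -- forcing along child edges
  have hForces : ∀ a b : Fin (Fintype.card V), child a = some b →
      Forces H k σ (σ a) (σ b) := by
    intro a b hab
    obtain ⟨hq, he⟩ := hchild1 a b hab
    refine ⟨a, b, rfl, rfl, ?_, hq, ?_⟩
    · rw [← he]; exact hFlt b hq
    · intro l hl
      have := hFspec b hq l hl
      rwa [he] at this
  have hFA : ∀ a b : V, Forces H k σ a b → H.Adj a b := by
    rintro a b ⟨i, j, hi, hj, _, _, hspec⟩
    have := (hspec j le_rfl).2 rfl
    rwa [hj] at this
  refine ⟨fun i => (L i).map σ, ?_, ?_, ?_, ?_, ?_, ?_⟩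
  · intro i
    rw [List.head?_map, head_eq]
    rfl
  · intro i
    exact (nodup hnext _ _).map σ.injective
  · intro v
    obtain ⟨i, hi⟩ := exists_mem (σ.symm v : ℕ) (σ.symm v) rfl
    refine ⟨i, (hmem v i).2 hi, ?_⟩
    intro j hj
    exact unique_mem (σ.symm v : ℕ) (σ.symm v) rfl j i ((hmem v j).1 hj) hi
  · intro i
    simp only [List.Chain', List.isChain_map]
    exact chain'_of hnext hForces _ _
  · intro i
    simp only [List.Chain', List.isChain_map]
    refine (chain'_of hnext hForces _ _).imp ?_
    intro a b h
    exact hFA _ _ h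
  · intro i a ha b hb hadj
    have hpa : a = σ (σ.symm a) := (σ.apply_symm_apply a).symm
    have hpb : b = σ (σ.symm b) := (σ.apply_symm_apply b).symm
    rw [hmem] at ha hb
    have main : ∀ p q : Fin (Fintype.card V), p ∈ L i → q ∈ L i → (p:ℕ) < (q:ℕ) →
        H.Adj (σ p) (σ q) → [σ p, σ q] <:+: (L i).map σ := by
      intro p q hp hq hlt hadj'
      obtain ⟨c, hc, hcq⟩ := between hnext _ _ _ _ hp hq hlt
      obtain ⟨hck, hFc⟩ := hchild1 p c hc
      have hspec := hFspec c hck q hcq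
      rw [hFc] at hspec
      have hqc : q = c := hspec.1 hadj'
      rw [hqc]
      exact (infix_next hnext _ _ _ _ (Nat.le_add_right _ _) hp hc).map σ
    have hne : (σ.symm a : ℕ) ≠ (σ.symm b : ℕ) := by
      intro h
      have : σ.symm a = σ.symm b := Fin.ext h
      exact hadj.ne (by rw [hpa, hpb, this])
    rcases Nat.lt_or_ge (σ.symm a : ℕ) (σ.symm b : ℕ) with h | h
    · left
      have := main _ _ ha hb h (by rw [← hpa, ← hpb]; exact hadj)
      rwa [← hpa, ← hpb] at this
    · right
      have hlt : (σ.symm b : ℕ) < (σ.symm a : ℕ) := lt_of_le_of_ne h (fun hv => hne hv.symm)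
      have := main _ _ hb ha hlt (by rw [← hpa, ← hpb]; exact hadj.symm)
      rwa [← hpa, ← hpb] at this
end

section
/- Let G be a connected finite simple graph with at least 2 vertices, let Z be a zero forcing set of L(G), let P_1,…,P_k be the associated forcing chains (induced paths in L(G)), ordered so that P_1,…,P_ℓ have at least 2 vertices and P_{ℓ+1},…,P_k have exactly 1 vertex, and let H be the spanning subgraph of G whose edge set is the union of the vertex sets of P_1,…,P_ℓ. Then the orientation of H in which an edge e = uv occurring as the j-th edge of the chain P_i is oriented from u to v whenever (j ≥ 2 and the (j−1)-th and j-th edges of P_i share the vertex u) or (j ≤ m_i − 1 and the j-th and (j+1)-th edges of P_i share the vertex v), is a well-defined acyclic orientation of H. -/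
open SimpleGraph

/-- The orientation of the subgraph `H` of `G` determined by the forcing chains
`P 0, …, P (k-1)` of the line graph of `G` (of which the first `ℓ` have at least two
vertices): the edge `e = uv` occurring at (0-indexed) position `j` of the chain `P i` with
`i < ℓ` is oriented from `u` towards `v` if and only if the `(j-1)`-th and `j`-th edges of
`P i` share the vertex `u`, or the `j`-th and `(j+1)`-th edges of `P i` share the vertex `v`. -/
def chainOrientRel {V : Type*} (G : SimpleGraph V) (k ℓ : ℕ)
    (P : Fin k → List G.edgeSet) (u v : V) : Prop :=
  ∃ i : Fin k, (i : ℕ) < ℓ ∧ ∃ j : ℕ, ∃ e : G.edgeSet,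
    (P i)[j]? = some e ∧ (e : Sym2 V) = s(u, v) ∧
      ((1 ≤ j ∧ ∃ e' : G.edgeSet, (P i)[j - 1]? = some e' ∧ u ∈ (e' : Sym2 V)) ∨
       (∃ e' : G.edgeSet, (P i)[j + 1]? = some e' ∧ v ∈ (e' : Sym2 V)))

lemma aux_chain_step {α : Type*} {R : α → α → Prop} {l : List α} (h : l.Chain' R)
    {j : ℕ} {a b : α} (ha : l[j]? = some a) (hb : l[j+1]? = some b) : R a b := by
  rw [List.getElem?_eq_some_iff] at ha hb
  obtain ⟨hj, ha⟩ := ha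
  obtain ⟨hj1, hb⟩ := hb
  have := (List.isChain_iff_getElem.mp h) j (by omega)
  simpa [List.get_eq_getElem, ha, hb] using this

lemma aux_infix_pair {α : Type*} {l : List α} {a b : α} (h : [a, b] <:+: l) :
    ∃ m : ℕ, l[m]? = some a ∧ l[m+1]? = some b := by
  obtain ⟨s, t, rfl⟩ := h
  refine ⟨s.length, ?_, ?_⟩
  · rw [List.append_assoc, List.getElem?_append_right le_rfl]
    simp
  · rw [List.append_assoc, List.getElem?_append_right (by omega : s.length ≤ s.length + 1)]
    simp

lemma aux_forces_facts {E : Type*} [Fintype E] (H : SimpleGraph E) (k : ℕ)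
    (σ : Fin (Fintype.card E) ≃ E) {a b : E} (h : Forces H k σ a b) :
    H.Adj a b ∧ (σ.symm a : ℕ) < (σ.symm b : ℕ) ∧
      ∀ x : E, H.Adj a x → x ≠ b → (σ.symm x : ℕ) < (σ.symm b : ℕ) := by
  obtain ⟨i, j, ha, hb, hij, -, huniq⟩ := h
  subst ha; subst hb
  refine ⟨(huniq j le_rfl).mpr rfl, by simpa using hij, ?_⟩
  intro x hx hxb
  by_contra hcon
  push_neg at hcon
  simp only [Equiv.symm_apply_apply] at hcon
  have h2 := (huniq (σ.symm x) hcon).mp (by simpa using hx)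
  exact hxb (by simpa using congrArg σ h2)

/-- The orientation of the spanning subgraph `H` of `G` (whose edges are the union of the
vertex sets of the forcing chains `P 0, …, P (ℓ-1)` of the line graph of `G`) given by
`chainOrientRel` is well defined (every edge of `H` receives exactly one direction) and
acyclic. -/
theorem chainOrientation_wellDefined_acyclic
    {V : Type*} [Fintype V] [DecidableEq V]
    (G : SimpleGraph V) [DecidableRel G.Adj]
    (hconn : G.Connected) (hcard : 2 ≤ Fintype.card V)
    (k ℓ : ℕ) (hℓk : ℓ ≤ k) (hk : k ≤ Fintype.card G.edgeSet)
    (σ : Fin (Fintype.card G.edgeSet) ≃ G.edgeSet)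
    (hσ : IsZeroForcingOrder G.lineGraph k σ)
    (P : Fin k → List G.edgeSet)
    (hhead : ∀ i : Fin k, (P i).head? = some (σ ⟨(i : ℕ), lt_of_lt_of_le i.isLt hk⟩))
    (hnodup : ∀ i : Fin k, (P i).Nodup)
    (hpart : ∀ e : G.edgeSet, ∃! i : Fin k, e ∈ P i)
    (hchain : ∀ i : Fin k, (P i).Chain' (Forces G.lineGraph k σ))
    (hind : ∀ i : Fin k, ∀ a ∈ P i, ∀ b ∈ P i,
      G.lineGraph.Adj a b → ([a, b] <:+: P i ∨ [b, a] <:+: P i))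
    (hlen : ∀ i : Fin k,
      ((i : ℕ) < ℓ → 2 ≤ (P i).length) ∧ (ℓ ≤ (i : ℕ) → (P i).length = 1)) :
    (∀ u v : V,
        (∃ i : Fin k, (i : ℕ) < ℓ ∧ ∃ e ∈ P i, (e : Sym2 V) = s(u, v)) →
          (chainOrientRel G k ℓ P u v ∨ chainOrientRel G k ℓ P v u)) ∧
    (∀ u v : V, chainOrientRel G k ℓ P u v → ¬ chainOrientRel G k ℓ P v u) ∧
    (∀ v : V, ¬ Relation.TransGen (chainOrientRel G k ℓ P) v v) := by
  classical
  have tinj : ∀ e f : G.edgeSet, (σ.symm e : ℕ) = (σ.symm f : ℕ) → e = f := by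
    intro e f h
    have h2 : σ.symm e = σ.symm f := Fin.ext h
    simpa using congrArg σ h2
  have getmem : ∀ (i : Fin k) (j : ℕ) (x : G.edgeSet), (P i)[j]? = some x → x ∈ P i := by
    intro i j x h
    exact List.mem_iff_getElem?.mpr ⟨j, h⟩
  have posu : ∀ (i : Fin k) (j j' : ℕ) (x : G.edgeSet),
      (P i)[j]? = some x → (P i)[j']? = some x → j = j' := by
    intro i j j' x h1 h2
    exact (List.getElem?_inj (List.getElem?_eq_some_iff.mp h1).1 (hnodup i)).mp (h1.trans h2.symm)
  have hadj_of : ∀ (x y : G.edgeSet) (w : V), x ≠ y → w ∈ (x : Sym2 V) → w ∈ (y : Sym2 V) →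
      G.lineGraph.Adj x y := by
    intro x y w hxy hwx hwy
    exact lineGraph_adj_iff_exists.mpr ⟨hxy, w, hwx, hwy⟩
  have hedge : ∀ (u v : V) (e : G.edgeSet), (e : Sym2 V) = s(u, v) → G.Adj u v := by
    intro u v e he
    have h := e.prop
    rw [he, SimpleGraph.mem_edgeSet] at h
    exact h
  -- antisymmetry
  have antisym : ∀ u v : V, chainOrientRel G k ℓ P u v → chainOrientRel G k ℓ P v u → False := by
    intro u v h1 h2
    obtain ⟨i, hiℓ, j, e, hej, he, hd1⟩ := h1
    obtain ⟨i', hi'ℓ, j', e', hej', he', hd2⟩ := h2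
    have huv : u ≠ v := (hedge u v e he).ne
    have hee' : e' = e := by
      apply Subtype.ext
      rw [he, he', Sym2.eq_swap]
    rw [hee'] at hej' he'
    have hii' : i = i' := (hpart e).unique (getmem i j e hej) (getmem i' j' e hej')
    subst hii'
    have hjj' : j = j' := posu i j j' e hej hej'
    subst hjj'
    rcases hd1 with ⟨hj1, p, hp, hup⟩ | ⟨g, hg, hvg⟩ <;>
      rcases hd2 with ⟨hj1', p', hp', hvp'⟩ | ⟨g', hg', hug'⟩
    · -- prev contains u and prev contains v
      have hpp' : p = p' := Option.some.inj (hp.symm.trans hp')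
      subst hpp'
      have hps : (p : Sym2 V) = s(u, v) := (Sym2.mem_and_mem_iff huv).mp ⟨hup, hvp'⟩
      have hpe : p = e := Subtype.ext (hps.trans he.symm)
      rw [hpe] at hp
      have := posu i (j-1) j e hp hej
      omega
    · -- prev contains u and next contains u
      have hpg : p ≠ g' := by
        intro hpg
        subst hpg
        have := posu i (j-1) (j+1) p hp hg'
        omega
      have hadj : G.lineGraph.Adj p g' := hadj_of p g' u hpg hup hug'
      rcases hind i p (getmem _ _ _ hp) g' (getmem _ _ _ hg') hadj with hinf | hinf
      · obtain ⟨m, hm1, hm2⟩ := aux_infix_pair hinf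
        have e1 := posu i m (j-1) p hm1 hp
        have e2 := posu i (m+1) (j+1) g' hm2 hg'
        omega
      · obtain ⟨m, hm1, hm2⟩ := aux_infix_pair hinf
        have e1 := posu i m (j+1) g' hm1 hg'
        have e2 := posu i (m+1) (j-1) p hm2 hp
        omega
    · -- next contains v and prev contains v
      have hpg : p' ≠ g := by
        intro hpg
        subst hpg
        have := posu i (j-1) (j+1) p' hp' hg
        omega
      have hadj : G.lineGraph.Adj p' g := hadj_of p' g v hpg hvp' hvg
      rcases hind i p' (getmem _ _ _ hp') g (getmem _ _ _ hg) hadj with hinf | hinf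
      · obtain ⟨m, hm1, hm2⟩ := aux_infix_pair hinf
        have e1 := posu i m (j-1) p' hm1 hp'
        have e2 := posu i (m+1) (j+1) g hm2 hg
        omega
      · obtain ⟨m, hm1, hm2⟩ := aux_infix_pair hinf
        have e1 := posu i m (j+1) g hm1 hg
        have e2 := posu i (m+1) (j-1) p' hm2 hp'
        omega
    · -- next contains v and next contains u
      have hgg' : g = g' := Option.some.inj (hg.symm.trans hg')
      subst hgg'
      have hgs : (g : Sym2 V) = s(u, v) := (Sym2.mem_and_mem_iff huv).mp ⟨hug', hvg⟩
      have hge : g = e := Subtype.ext (hgs.trans he.symm)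
      rw [hge] at hg
      have := posu i (j+1) j e hg hej
      omega
  -- totality
  have total : ∀ u v : V, (∃ i : Fin k, (i:ℕ) < ℓ ∧ ∃ e ∈ P i, (e : Sym2 V) = s(u,v)) →
      chainOrientRel G k ℓ P u v ∨ chainOrientRel G k ℓ P v u := by
    rintro u v ⟨i, hiℓ, e, hei, he⟩
    obtain ⟨j, hej⟩ := List.mem_iff_getElem?.mp hei
    have hjlt : j < (P i).length := (List.getElem?_eq_some_iff.mp hej).1
    have hlen2 : 2 ≤ (P i).length := (hlen i).1 hiℓ
    by_cases hnext : j + 1 < (P i).length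
    · obtain ⟨g, hg⟩ : ∃ g, (P i)[j+1]? = some g :=
        ⟨(P i)[j+1], (List.getElem?_eq_some_iff).mpr ⟨hnext, rfl⟩⟩
      obtain ⟨hadj, -, -⟩ := aux_forces_facts _ _ _ (aux_chain_step (hchain i) hej hg)
      obtain ⟨-, w, hwe, hwg⟩ := lineGraph_adj_iff_exists.mp hadj
      rw [he] at hwe
      rcases Sym2.mem_iff.mp hwe with rfl | rfl
      · exact Or.inr ⟨i, hiℓ, j, e, hej, by rw [he, Sym2.eq_swap], Or.inr ⟨g, hg, hwg⟩⟩
      · exact Or.inl ⟨i, hiℓ, j, e, hej, he, Or.inr ⟨g, hg, hwg⟩⟩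
    · have hj1 : 1 ≤ j := by omega
      obtain ⟨p, hp⟩ : ∃ p, (P i)[j-1]? = some p :=
        ⟨(P i)[j-1]'(by omega), (List.getElem?_eq_some_iff).mpr ⟨by omega, rfl⟩⟩
      have hpe : (P i)[(j-1)+1]? = some e := by
        have hh : j - 1 + 1 = j := by omega
        rw [hh]; exact hej
      obtain ⟨hadj, -, -⟩ := aux_forces_facts _ _ _ (aux_chain_step (hchain i) hp hpe)
      obtain ⟨-, w, hwp, hwe⟩ := lineGraph_adj_iff_exists.mp hadj
      rw [he] at hwe
      rcases Sym2.mem_iff.mp hwe with rfl | rfl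
      · exact Or.inl ⟨i, hiℓ, j, e, hej, he, Or.inl ⟨hj1, p, hp, hwp⟩⟩
      · exact Or.inr ⟨i, hiℓ, j, e, hej, by rw [he, Sym2.eq_swap], Or.inl ⟨hj1, p, hp, hwp⟩⟩
  -- acyclicity
  set T : V → ℕ := fun w =>
    (Finset.univ.filter (fun e : G.edgeSet => w ∈ (e : Sym2 V))).sup
      (fun e => (σ.symm e : ℕ)) with hTdef
  have tleT : ∀ (w : V) (e : G.edgeSet), w ∈ (e : Sym2 V) → (σ.symm e : ℕ) ≤ T w := by
    intro w e hw
    have hmem : e ∈ Finset.univ.filter (fun e : G.edgeSet => w ∈ (e : Sym2 V)) :=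
      Finset.mem_filter.mpr ⟨Finset.mem_univ _, hw⟩
    simp only [hTdef]
    exact Finset.le_sup (f := fun e : G.edgeSet => (σ.symm e : ℕ)) hmem
  have Tle : ∀ (w : V) (N : ℕ),
      (∀ e : G.edgeSet, w ∈ (e : Sym2 V) → (σ.symm e : ℕ) ≤ N) → T w ≤ N := by
    intro w N h
    simp only [hTdef]
    exact Finset.sup_le (fun e he => h e (Finset.mem_filter.mp he).2)
  have Tlt : ∀ (w : V) (N : ℕ), 0 < N →
      (∀ e : G.edgeSet, w ∈ (e : Sym2 V) → (σ.symm e : ℕ) < N) → T w < N := by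
    intro w N hN h
    simp only [hTdef]
    exact (Finset.sup_lt_iff hN).mpr (fun e he => h e (Finset.mem_filter.mp he).2)
  have key : ∀ u v : V, chainOrientRel G k ℓ P u v →
      ∃ e : G.edgeSet, (e : Sym2 V) = s(u, v) ∧ (T u < T v ∨ T u = (σ.symm e : ℕ)) := by
    intro u v h
    obtain ⟨i, hiℓ, j, e, hej, he, hd⟩ := h
    have huv : u ≠ v := (hedge u v e he).ne
    have hue : u ∈ (e : Sym2 V) := by rw [he]; exact Sym2.mem_mk_left u v
    have hve : v ∈ (e : Sym2 V) := by rw [he]; exact Sym2.mem_mk_right u v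
    refine ⟨e, he, ?_⟩
    rcases hd with ⟨hj1, p, hp, hup⟩ | ⟨g, hg, hvg⟩
    · right
      have hpe : (P i)[(j-1)+1]? = some e := by
        have hh : j - 1 + 1 = j := by omega
        rw [hh]; exact hej
      obtain ⟨hadjpe, htpe, huniq⟩ := aux_forces_facts _ _ _ (aux_chain_step (hchain i) hp hpe)
      refine le_antisymm (Tle u _ ?_) (tleT u e hue)
      intro x hx
      by_cases hxe : x = e
      · subst hxe; exact le_rfl
      by_cases hxp : x = p
      · subst hxp; exact le_of_lt htpe
      · exact le_of_lt (huniq x (hadj_of p x u (Ne.symm hxp) hup hx) hxe)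
    · left
      obtain ⟨hadjeg, hteg, huniq⟩ := aux_forces_facts _ _ _ (aux_chain_step (hchain i) hej hg)
      have hge : g ≠ e := by
        intro hge
        have := posu i (j+1) j e (hge ▸ hg) hej
        omega
      have hug : u ∉ (g : Sym2 V) := by
        intro hug
        exact hge (Subtype.ext (((Sym2.mem_and_mem_iff huv).mp ⟨hug, hvg⟩).trans he.symm))
      have h1 : T u < (σ.symm g : ℕ) := by
        refine Tlt u _ (by omega) ?_
        intro x hx
        by_cases hxe : x = e
        · subst hxe; exact hteg
        · refine huniq x (hadj_of e x u (Ne.symm hxe) hue hx) ?_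
          intro hxg; subst hxg; exact hug hx
      exact lt_of_lt_of_le h1 (tleT v g hvg)
  have mono : ∀ u v : V, chainOrientRel G k ℓ P u v → T u ≤ T v := by
    intro u v h
    obtain ⟨e, he, hc⟩ := key u v h
    rcases hc with h1 | h1
    · exact le_of_lt h1
    · rw [h1]; exact tleT v e (by rw [he]; exact Sym2.mem_mk_right u v)
  have rtmono : ∀ a b : V, Relation.ReflTransGen (chainOrientRel G k ℓ P) a b → T a ≤ T b := by
    intro a b h
    induction h with
    | refl => exact le_rfl
    | tail _ h2 ih => exact le_trans ih (mono _ _ h2)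
  refine ⟨total, fun u v h1 h2 => antisym u v h1 h2, ?_⟩
  intro v hcyc
  obtain ⟨x, hvx, hxv⟩ := (Relation.TransGen.head'_iff).mp hcyc
  rcases Relation.ReflTransGen.cases_head hxv with rfl | ⟨y, hxy, hyv⟩
  · obtain ⟨i, -, j, e, -, he, -⟩ := hvx
    exact (G.loopless.irrefl _) (hedge _ _ e he)
  have hTvx : T v ≤ T x := mono _ _ hvx
  have hTxy : T x ≤ T y := mono _ _ hxy
  have hTyv : T y ≤ T v := rtmono _ _ hyv
  obtain ⟨e1, he1, hc1⟩ := key v x hvx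
  obtain ⟨e2, he2, hc2⟩ := key x y hxy
  have h1 : T v = (σ.symm e1 : ℕ) := by
    rcases hc1 with h | h
    · omega
    · exact h
  have h2 : T x = (σ.symm e2 : ℕ) := by
    rcases hc2 with h | h
    · omega
    · exact h
  have he12 : e1 = e2 := tinj e1 e2 (by omega)
  have hs : s(v, x) = s(x, y) := by rw [← he1, he12, he2]
  have hvx_ne : v ≠ x := (hedge v x e1 he1).ne
  rcases Sym2.eq_iff.mp hs with ⟨h3, h4⟩ | ⟨h3, h4⟩
  · exact hvx_ne h3
  · exact antisym v x hvx (h3 ▸ hxy)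
end
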